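/- arXiv:2507.07606 — 5 statements merged into one kernel-verified Lean document; each statement's English description precedes it below -/
import Mathlib

section
/- For every a, b ≥ 1, every n ∈ ℕ, and every 2-coloring of the vertices of the (a+b−1)-fractal of dimension n, either there is a vertex-subset order-isomorphic (as a sub-pattern) to the a-fractal of dimension n all of whose vertices have color 0, or there is a vertex-subset order-isomorphic to the b-fractal of dimension n all of whose vertices have color 1. -/
/-- The `k`-fractal of dimension `n`, as a permutation given by its list of values. -/
def kfractal (k : ℕ) : ℕ → List ℕ
  | 0 => [0]
  | n + 1 =>
    if n % 2 = 0 then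
      (List.range k).flatMap fun i => (kfractal k n).map (· + i * (kfractal k n).length)
    else
      (List.range k).flatMap fun i => (kfractal k n).map (· + (k - 1 - i) * (kfractal k n).length)

/-- Value function of the `k`-fractal. -/
def F (k : ℕ) : ℕ → ℕ → ℕ
  | 0, _ => 0
  | n+1, m => F k n (m % k^n) + (if n % 2 = 0 then m / k^n else k - 1 - m / k^n) * k^n

lemma F_lt (k : ℕ) (hk : 1 ≤ k) : ∀ n m, m < k^n → F k n m < k^n
  | 0, m, hm => by simpa [F] using hm
  | n+1, m, hm => by
    have hp : 0 < k^n := Nat.pow_pos hk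
    have h1 : F k n (m % k^n) < k^n := F_lt k hk n _ (Nat.mod_lt _ hp)
    have hdiv : m / k^n < k := Nat.div_lt_of_lt_mul (by rw [← pow_succ]; exact hm)
    have e : F k (n+1) m
        = F k n (m % k^n) + (if n % 2 = 0 then m / k^n else k - 1 - m / k^n) * k^n := rfl
    rw [e]
    generalize m / k^n = d at hdiv ⊢
    have h2 : (if n % 2 = 0 then d else k - 1 - d) ≤ k - 1 := by split <;> omega
    have h3 : (if n % 2 = 0 then d else k - 1 - d) * k^n ≤ (k-1) * k^n :=
      Nat.mul_le_mul_right _ h2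
    have h4 : k^(n+1) = (k-1) * k^n + k^n := by
      obtain ⟨k', rfl⟩ : ∃ k', k = k' + 1 := ⟨k - 1, by omega⟩
      simp [pow_succ, Nat.mul_succ, Nat.mul_comm]
    omega

lemma F_decomp (k n i j : ℕ) (hk : 1 ≤ k) (hj : j < k^n) :
    F k (n+1) (i * k^n + j) = F k n j + (if n % 2 = 0 then i else k - 1 - i) * k^n := by
  have hp : 0 < k^n := Nat.pow_pos hk
  have hmod : (i * k^n + j) % k^n = j := by
    rw [Nat.add_comm, Nat.add_mul_mod_self_right, Nat.mod_eq_of_lt hj]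
  have hdiv : (i * k^n + j) / k^n = i := by
    rw [Nat.add_comm, Nat.add_mul_div_right _ _ hp, Nat.div_eq_of_lt hj, Nat.zero_add]
  show F k n _ + _ = _
  rw [hmod, hdiv]

lemma range_mul_map {α : Type*} (k m : ℕ) (f : ℕ → α) :
    (List.range (k*m)).map f
      = (List.range k).flatMap fun i => (List.range m).map fun j => f (i*m + j) := by
  induction k with
  | zero => simp
  | succ k ih =>
    rw [List.range_succ, List.flatMap_append, ← ih, Nat.succ_mul, List.range_add,
      List.map_append, List.map_map]
    simp [Function.comp, Nat.add_comm, Nat.mul_comm]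

lemma kfractal_eq (k : ℕ) (hk : 1 ≤ k) : ∀ n, kfractal k n = (List.range (k^n)).map (F k n)
  | 0 => by simp [kfractal, F, List.range_succ]
  | n+1 => by
    have ih := kfractal_eq k hk n
    have hlen : (kfractal k n).length = k^n := by rw [ih]; simp
    have key : ∀ g : ℕ → ℕ,
        ((List.range k).flatMap fun i => (kfractal k n).map (· + g i * (kfractal k n).length))
          = (List.range k).flatMap fun i => (List.range (k^n)).map fun j => F k n j + g i * k^n := by
      intro g
      conv_lhs => rw [ih]
      simp only [hlen, List.length_map, List.length_range, List.map_map, Function.comp_def]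
    have main : kfractal k (n+1)
        = (List.range k).flatMap fun i => (List.range (k^n)).map fun j =>
            F k n j + (if n % 2 = 0 then i else k - 1 - i) * k^n := by
      rw [kfractal]
      split
      · rw [key (fun i => i)]
      · rw [key (fun i => k - 1 - i)]
    rw [main]
    have : (List.range (k^(n+1))).map (F k (n+1))
        = (List.range k).flatMap fun i => (List.range (k^n)).map fun j =>
            F k (n+1) (i * k^n + j) := by
      rw [pow_succ', range_mul_map]
    rw [this]
    apply List.flatMap_congr; intro i hi
    apply List.map_congr_left; intro j hj
    rw [F_decomp k n i j hk (List.mem_range.mp hj)]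

lemma add_mul_lt {p q q' r r' : ℕ} (hr : r < p) (h : q < q') : r + q*p < r' + q'*p := by
  have h0 : q + 1 ≤ q' := h
  calc r + q*p < p + q*p := by omega
  _ = (q+1)*p := by ring
  _ ≤ q'*p := Nat.mul_le_mul_right p h0
  _ ≤ r' + q'*p := by omega

lemma block_lt {p q q' r r' : ℕ} (hr : r < p) (hr' : r' < p) :
    r + q * p < r' + q' * p ↔ q < q' ∨ (q = q' ∧ r < r') := by
  constructor
  · intro hlt
    rcases lt_trichotomy q q' with h|h|h
    · exact Or.inl h
    · subst h; exact Or.inr ⟨rfl, by omega⟩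
    · exact absurd (add_mul_lt (r' := r) hr' h) (by omega)
  · rintro (h | ⟨rfl, h⟩)
    · exact add_mul_lt hr h
    · omega

lemma combine (k K n : ℕ) (hk : 1 ≤ k) (hK : 1 ≤ K) (c : ℕ → Fin 2) (col : Fin 2)
    (t : Fin k → Fin K) (ht : StrictMono t)
    (s : Fin k → Fin (k^n) → Fin (K^n))
    (hs : ∀ j, StrictMono (s j))
    (hiso : ∀ j x y, F K n (s j x) < F K n (s j y) ↔ F k n (x:ℕ) < F k n (y:ℕ))
    (hcol : ∀ j x, c ((s j x : ℕ) + (t j : ℕ) * K^n) = col) :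
    ∃ S : Fin (k^(n+1)) → Fin (K^(n+1)), StrictMono S ∧
      (∀ x y, F K (n+1) (S x) < F K (n+1) (S y) ↔ F k (n+1) (x:ℕ) < F k (n+1) (y:ℕ)) ∧
      ∀ x, c (S x : ℕ) = col := by
  have hpk : 0 < k^n := Nat.pow_pos hk
  have hpK : 0 < K^n := Nat.pow_pos hK
  have hJlt : ∀ m : Fin (k^(n+1)), (m : ℕ) / k^n < k := fun m =>
    Nat.div_lt_of_lt_mul (by rw [← pow_succ]; exact m.isLt)
  let J : Fin (k^(n+1)) → Fin k := fun m => ⟨(m : ℕ) / k^n, hJlt m⟩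
  let X : Fin (k^(n+1)) → Fin (k^n) := fun m => ⟨(m : ℕ) % k^n, Nat.mod_lt _ hpk⟩
  have hbound : ∀ m : Fin (k^(n+1)), (s (J m) (X m) : ℕ) + (t (J m) : ℕ) * K^n < K^(n+1) := by
    intro m
    have h1 : (s (J m) (X m) : ℕ) < K^n := (s _ _).isLt
    have h2 : ((t (J m) : ℕ)+1) * K^n ≤ K * K^n := Nat.mul_le_mul_right _ (t (J m)).isLt
    have h3 : ((t (J m) : ℕ)+1) * K^n = (t (J m) : ℕ)*K^n + K^n := Nat.succ_mul _ _
    rw [pow_succ']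
    omega
  refine ⟨fun m => ⟨(s (J m) (X m) : ℕ) + (t (J m) : ℕ) * K^n, hbound m⟩, ?_, ?_, ?_⟩
  · -- StrictMono
    intro m m' hmm'
    have hdec : ∀ m : Fin (k^(n+1)), (X m : ℕ) + (J m : ℕ) * k^n = (m : ℕ) := fun m =>
      Nat.mod_add_div' _ _
    have h1 : (X m : ℕ) + (J m : ℕ) * k^n < (X m' : ℕ) + (J m' : ℕ) * k^n := by
      rw [hdec, hdec]; exact hmm'
    rw [block_lt (X m).isLt (X m').isLt] at h1
    show (s (J m) (X m) : ℕ) + (t (J m) : ℕ) * K^n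
        < (s (J m') (X m') : ℕ) + (t (J m') : ℕ) * K^n
    rw [block_lt (s _ _).isLt (s _ _).isLt]
    rcases h1 with h | ⟨hJeq, hX⟩
    · left
      exact ht (Fin.lt_def.mpr h)
    · right
      have hJ : J m = J m' := Fin.ext hJeq
      refine ⟨by rw [hJ], ?_⟩
      rw [hJ]
      exact hs (J m') (show X m < X m' from Fin.lt_def.mpr hX)
  · -- order iso
    intro m m'
    have hFS : ∀ m : Fin (k^(n+1)),
        F K (n+1) ((s (J m) (X m) : ℕ) + (t (J m) : ℕ) * K^n)
          = F K n (s (J m) (X m) : ℕ)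
            + (if n % 2 = 0 then (t (J m) : ℕ) else K - 1 - (t (J m) : ℕ)) * K^n := by
      intro m
      rw [Nat.add_comm ((s (J m) (X m) : ℕ)) ((t (J m) : ℕ) * K^n)]
      exact F_decomp K n _ _ hK (s _ _).isLt
    have hFm : ∀ m : Fin (k^(n+1)),
        F k (n+1) (m : ℕ)
          = F k n (X m : ℕ)
            + (if n % 2 = 0 then (J m : ℕ) else k - 1 - (J m : ℕ)) * k^n := fun m => rfl
    show F K (n+1) ((s (J m) (X m) : ℕ) + (t (J m) : ℕ) * K^n)
        < F K (n+1) ((s (J m') (X m') : ℕ) + (t (J m') : ℕ) * K^n) ↔ _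
    rw [hFS m, hFS m', hFm m, hFm m',
      block_lt (F_lt K hK n _ (s _ _).isLt) (F_lt K hK n _ (s _ _).isLt),
      block_lt (F_lt k hk n _ (X m).isLt) (F_lt k hk n _ (X m').isLt)]
    have htlt : ((t (J m) : ℕ) < (t (J m') : ℕ)) ↔ ((J m : ℕ) < (J m' : ℕ)) := by
      rw [← Fin.lt_def, ← Fin.lt_def]; exact ht.lt_iff_lt
    have hteq : ((t (J m) : ℕ) = (t (J m') : ℕ)) ↔ ((J m : ℕ) = (J m' : ℕ)) := by
      rw [Fin.val_eq_val, Fin.val_eq_val]; exact ht.injective.eq_iff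
    have hJb : (J m : ℕ) < k := (J m).isLt
    have hJb' : (J m' : ℕ) < k := (J m').isLt
    have htb : (t (J m) : ℕ) < K := (t _).isLt
    have htb' : (t (J m') : ℕ) < K := (t _).isLt
    have e1 : (if n % 2 = 0 then (t (J m) : ℕ) else K - 1 - (t (J m) : ℕ))
        < (if n % 2 = 0 then (t (J m') : ℕ) else K - 1 - (t (J m') : ℕ))
        ↔ (if n % 2 = 0 then (J m : ℕ) else k - 1 - (J m : ℕ))
          < (if n % 2 = 0 then (J m' : ℕ) else k - 1 - (J m' : ℕ)) := by
      split <;> omega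
    have e2 : (if n % 2 = 0 then (t (J m) : ℕ) else K - 1 - (t (J m) : ℕ))
        = (if n % 2 = 0 then (t (J m') : ℕ) else K - 1 - (t (J m') : ℕ))
        ↔ (if n % 2 = 0 then (J m : ℕ) else k - 1 - (J m : ℕ))
          = (if n % 2 = 0 then (J m' : ℕ) else k - 1 - (J m' : ℕ)) := by
      split <;> omega
    have e3 : (if n % 2 = 0 then (J m : ℕ) else k - 1 - (J m : ℕ))
        = (if n % 2 = 0 then (J m' : ℕ) else k - 1 - (J m' : ℕ)) → J m = J m' := by
      intro h; apply Fin.ext; revert h; split <;> omega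
    constructor
    · rintro (h | ⟨heq, hin⟩)
      · exact Or.inl (e1.mp h)
      · right
        have hJ : J m = J m' := e3 (e2.mp heq)
        refine ⟨e2.mp heq, ?_⟩
        rw [hJ] at hin
        exact (hiso (J m') (X m) (X m')).mp hin
    · rintro (h | ⟨heq, hin⟩)
      · exact Or.inl (e1.mpr h)
      · right
        have hJ : J m = J m' := e3 heq
        refine ⟨e2.mpr heq, ?_⟩
        rw [hJ]
        exact (hiso (J m') (X m) (X m')).mpr hin
  · intro m
    exact hcol (J m) (X m)

lemma step (k K n : ℕ) (hk : 1 ≤ k) (hK : 1 ≤ K) (c : ℕ → Fin 2) (col : Fin 2)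
    (T : Finset ℕ) (hT : ∀ i ∈ T, i < K) (hcard : k ≤ T.card)
    (h : ∀ i ∈ T, ∃ s : Fin (k^n) → Fin (K^n), StrictMono s ∧
        (∀ x y, F K n (s x : ℕ) < F K n (s y : ℕ) ↔ F k n (x:ℕ) < F k n (y:ℕ)) ∧
        ∀ x, c ((s x : ℕ) + i * K^n) = col) :
    ∃ S : Fin (k^(n+1)) → Fin (K^(n+1)), StrictMono S ∧
      (∀ x y, F K (n+1) (S x : ℕ) < F K (n+1) (S y : ℕ) ↔ F k (n+1) (x:ℕ) < F k (n+1) (y:ℕ)) ∧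
      ∀ x, c (S x : ℕ) = col := by
  let t0 := T.orderEmbOfCardLe hcard
  have hmem : ∀ j, t0 j ∈ T := fun j => T.orderEmbOfCardLe_mem hcard j
  let t : Fin k → Fin K := fun j => ⟨t0 j, hT _ (hmem j)⟩
  have ht : StrictMono t := fun p q hpq => t0.strictMono hpq
  choose s hs1 hs2 hs3 using fun j : Fin k => h (t0 j) (hmem j)
  exact combine k K n hk hK c col t ht s hs1 hs2 (fun j x => hs3 j x)

lemma main (a b : ℕ) (ha : 1 ≤ a) (hb : 1 ≤ b) (n : ℕ) : ∀ c : ℕ → Fin 2,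
    (∃ s : Fin (a^n) → Fin ((a+b-1)^n), StrictMono s ∧
      (∀ x y, F (a+b-1) n (s x : ℕ) < F (a+b-1) n (s y : ℕ) ↔ F a n (x:ℕ) < F a n (y:ℕ)) ∧
      ∀ x, c (s x : ℕ) = 0) ∨
    (∃ s : Fin (b^n) → Fin ((a+b-1)^n), StrictMono s ∧
      (∀ x y, F (a+b-1) n (s x : ℕ) < F (a+b-1) n (s y : ℕ) ↔ F b n (x:ℕ) < F b n (y:ℕ)) ∧
      ∀ x, c (s x : ℕ) = 1) := by
  induction n with
  | zero =>
    intro c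
    have hsm : ∀ N : ℕ, N = 1 → ∀ f : Fin N → Fin ((a+b-1)^0), StrictMono f := by
      intro N hN f x y hxy
      exfalso
      have hx := x.isLt; have hy := y.isLt
      rw [Fin.lt_def] at hxy
      omega
    have h01 : c 0 = 0 ∨ c 0 = 1 := match h : c 0 with
      | 0 => Or.inl rfl
      | 1 => Or.inr rfl
    have hpos : 0 < (a+b-1)^0 := by norm_num
    rcases h01 with h | h
    · left
      exact ⟨fun _ => ⟨0, hpos⟩, hsm _ (pow_zero a) _, fun x y => by simp [F], fun x => h⟩
    · right
      exact ⟨fun _ => ⟨0, hpos⟩, hsm _ (pow_zero b) _, fun x y => by simp [F], fun x => h⟩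
  | succ n IH =>
    intro c
    classical
    set K := a + b - 1 with hKdef
    have hK : 1 ≤ K := by omega
    let P0 : ℕ → Prop := fun i => ∃ s : Fin (a^n) → Fin (K^n), StrictMono s ∧
      (∀ x y, F K n (s x : ℕ) < F K n (s y : ℕ) ↔ F a n (x:ℕ) < F a n (y:ℕ)) ∧
      ∀ x, c ((s x : ℕ) + i * K^n) = 0
    let P1 : ℕ → Prop := fun i => ∃ s : Fin (b^n) → Fin (K^n), StrictMono s ∧
      (∀ x y, F K n (s x : ℕ) < F K n (s y : ℕ) ↔ F b n (x:ℕ) < F b n (y:ℕ)) ∧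
      ∀ x, c ((s x : ℕ) + i * K^n) = 1
    have hP : ∀ i, P0 i ∨ P1 i := fun i => IH (fun m => c (m + i * K^n))
    let S0 := (Finset.range K).filter P0
    let S1 := (Finset.range K).filter P1
    have hsub : Finset.range K ⊆ S0 ∪ S1 := by
      intro i hi
      rcases hP i with h | h
      · exact Finset.mem_union_left _ (Finset.mem_filter.mpr ⟨hi, h⟩)
      · exact Finset.mem_union_right _ (Finset.mem_filter.mpr ⟨hi, h⟩)
    have hcards : K ≤ S0.card + S1.card := by
      calc K = (Finset.range K).card := (Finset.card_range K).symm
      _ ≤ (S0 ∪ S1).card := Finset.card_le_card hsub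
      _ ≤ S0.card + S1.card := Finset.card_union_le _ _
    by_cases hA : a ≤ S0.card
    · left
      exact step a K n ha hK c 0 S0
        (fun i hi => Finset.mem_range.mp (Finset.mem_filter.mp hi).1) hA
        (fun i hi => (Finset.mem_filter.mp hi).2)
    · right
      have hB : b ≤ S1.card := by omega
      exact step b K n hb hK c 1 S1
        (fun i hi => Finset.mem_range.mp (Finset.mem_filter.mp hi).1) hB
        (fun i hi => (Finset.mem_filter.mp hi).2)

lemma kfractal_len (k n : ℕ) (hk : 1 ≤ k) : (kfractal k n).length = k^n := by
  rw [kfractal_eq k hk n]; simp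

lemma kfractal_get (k n : ℕ) (hk : 1 ≤ k) (i : Fin (kfractal k n).length) :
    (kfractal k n).get i = F k n (i : ℕ) := by
  rw [List.get_of_eq (kfractal_eq k hk n) i]
  simp

/-- Partition lemma for fractals: any 2-coloring of the vertices of the `(a+b-1)`-fractal of
dimension `n` admits either a color-0 sub-pattern isomorphic to the `a`-fractal of dimension
`n`, or a color-1 sub-pattern isomorphic to the `b`-fractal of dimension `n`. -/
theorem kfractal_partition (a b n : ℕ) (ha : 1 ≤ a) (hb : 1 ≤ b)
    (c : ℕ → Fin 2) :
    (∃ s : Fin (kfractal a n).length → Fin (kfractal (a + b - 1) n).length,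
      StrictMono s ∧
      (∀ i j, (kfractal (a + b - 1) n).get (s i) < (kfractal (a + b - 1) n).get (s j) ↔
        (kfractal a n).get i < (kfractal a n).get j) ∧
      ∀ i, c (s i).val = 0) ∨
    (∃ s : Fin (kfractal b n).length → Fin (kfractal (a + b - 1) n).length,
      StrictMono s ∧
      (∀ i j, (kfractal (a + b - 1) n).get (s i) < (kfractal (a + b - 1) n).get (s j) ↔
        (kfractal b n).get i < (kfractal b n).get j) ∧
      ∀ i, c (s i).val = 1) := by
  have hK : 1 ≤ a + b - 1 := by omega
  have lena := kfractal_len a n ha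
  have lenb := kfractal_len b n hb
  have lenK := kfractal_len (a+b-1) n hK
  rcases main a b ha hb n c with ⟨s, hs1, hs2, hs3⟩ | ⟨s, hs1, hs2, hs3⟩
  · left
    refine ⟨fun i => Fin.cast lenK.symm (s (Fin.cast lena i)), ?_, ?_, ?_⟩
    · intro i j hij
      have : s (Fin.cast lena i) < s (Fin.cast lena j) :=
        hs1 (show Fin.cast lena i < Fin.cast lena j from hij)
      exact this
    · intro i j
      rw [kfractal_get _ _ hK, kfractal_get _ _ hK, kfractal_get _ _ ha, kfractal_get _ _ ha]
      simpa using hs2 (Fin.cast lena i) (Fin.cast lena j)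
    · intro i
      simpa using hs3 (Fin.cast lena i)
  · right
    refine ⟨fun i => Fin.cast lenK.symm (s (Fin.cast lenb i)), ?_, ?_, ?_⟩
    · intro i j hij
      exact hs1 (show Fin.cast lenb i < Fin.cast lenb j from hij)
    · intro i j
      rw [kfractal_get _ _ hK, kfractal_get _ _ hK, kfractal_get _ _ hb, kfractal_get _ _ hb]
      simpa using hs2 (Fin.cast lenb i) (Fin.cast lenb j)
    · intro i
      simpa using hs3 (Fin.cast lenb i)
end

section
/- For every k ≥ 2, the family of k-fractals is a basis for the separable permutations: every separable permutation is a sub-pattern of the k-fractal of some dimension n. -/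
/-- `t` is a sub-pattern of the permutation (given as the list of its values) `l`. -/
def SubPattern (t l : List ℕ) : Prop :=
  ∃ s : Fin t.length → Fin l.length, StrictMono s ∧
    ∀ a b : Fin t.length, l.get (s a) < l.get (s b) ↔ t.get a < t.get b

/-- Separable permutations: obtained from the trivial one-element permutation by
iterated direct sums and skew sums. -/
inductive SeparablePerm : List ℕ → Prop
  | trivial : SeparablePerm [0]
  | directSum {l₁ l₂ : List ℕ} : SeparablePerm l₁ → SeparablePerm l₂ →
      SeparablePerm (l₁ ++ l₂.map (· + l₁.length))
  | skewSum {l₁ l₂ : List ℕ} : SeparablePerm l₁ → SeparablePerm l₂ →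
      SeparablePerm (l₁.map (· + l₂.length) ++ l₂)

lemma subPattern_refl (l : List ℕ) : SubPattern l l :=
  ⟨id, strictMono_id, fun _ _ => Iff.rfl⟩

lemma subPattern_trans {a b c : List ℕ} (h₁ : SubPattern a b) (h₂ : SubPattern b c) :
    SubPattern a c := by
  obtain ⟨s₁, hm₁, hi₁⟩ := h₁
  obtain ⟨s₂, hm₂, hi₂⟩ := h₂
  exact ⟨s₂ ∘ s₁, hm₂.comp hm₁, fun i j => (hi₂ _ _).trans (hi₁ _ _)⟩

lemma subPattern_map_add {t l : List ℕ} (c : ℕ) (h : SubPattern t l) :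
    SubPattern t (l.map (· + c)) := by
  obtain ⟨s, hm, hi⟩ := h
  refine ⟨fun i => ⟨s i, by simpa using (s i).isLt⟩, fun i j hij => hm hij, fun i j => ?_⟩
  have := hi i j
  simp only [List.get_eq_getElem, List.getElem_map] at *
  omega

lemma subPattern_append_right {t p : List ℕ} (q : List ℕ) (h : SubPattern t p) :
    SubPattern t (p ++ q) := by
  obtain ⟨s, hm, hi⟩ := h
  refine ⟨fun i => ⟨s i, by simp; omega⟩, fun i j hij => hm hij, fun i j => ?_⟩
  simp only [List.get_eq_getElem, List.getElem_append_left (s i).isLt,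
    List.getElem_append_left (s j).isLt]
  exact hi i j

lemma subPattern_directSum {t₁ t₂ a b : List ℕ}
    (ht₁ : ∀ x ∈ t₁, x < t₁.length) (ha : ∀ x ∈ a, x < a.length)
    (h₁ : SubPattern t₁ a) (h₂ : SubPattern t₂ b) :
    SubPattern (t₁ ++ t₂.map (· + t₁.length)) (a ++ b.map (· + a.length)) := by
  obtain ⟨s₁, hm₁, hi₁⟩ := h₁
  obtain ⟨s₂, hm₂, hi₂⟩ := h₂
  have hT : (t₁ ++ t₂.map (· + t₁.length)).length = t₁.length + t₂.length := by simp
  have hL : (a ++ b.map (· + a.length)).length = a.length + b.length := by simp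
  refine ⟨fun i => if h : (i : ℕ) < t₁.length then ⟨s₁ ⟨i, h⟩, by omega⟩
    else ⟨a.length + s₂ ⟨(i : ℕ) - t₁.length, by have := i.isLt; omega⟩, by
      have := (s₂ ⟨(i : ℕ) - t₁.length, by have := i.isLt; omega⟩).isLt; omega⟩, ?_, ?_⟩
  · intro i j hij
    have hij' : (i : ℕ) < (j : ℕ) := hij
    by_cases hi' : (i : ℕ) < t₁.length <;> by_cases hj' : (j : ℕ) < t₁.length
    · simp only [dif_pos hi', dif_pos hj', Fin.mk_lt_mk]
      exact hm₁ (by exact hij')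
    · simp only [dif_pos hi', dif_neg hj', Fin.mk_lt_mk]
      have := (s₁ ⟨i, hi'⟩).isLt; omega
    · omega
    · simp only [dif_neg hi', dif_neg hj', Fin.mk_lt_mk]
      have h2 : (⟨(i:ℕ) - t₁.length, by have := i.isLt; omega⟩ : Fin t₂.length) <
          ⟨(j:ℕ) - t₁.length, by have := j.isLt; omega⟩ := by
        rw [Fin.mk_lt_mk]; omega
      have := Fin.lt_def.mp (hm₂ h2)
      omega
  · intro i j
    have key : ∀ m : Fin (t₁ ++ t₂.map (· + t₁.length)).length,
        ((a ++ b.map (· + a.length)).get (if h : (m : ℕ) < t₁.length then ⟨s₁ ⟨m, h⟩, by omega⟩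
          else ⟨a.length + s₂ ⟨(m : ℕ) - t₁.length, by have := m.isLt; omega⟩, by
            have := (s₂ ⟨(m : ℕ) - t₁.length, by have := m.isLt; omega⟩).isLt; omega⟩) =
          if h : (m : ℕ) < t₁.length then a.get (s₁ ⟨m, h⟩)
          else b.get (s₂ ⟨(m : ℕ) - t₁.length, by have := m.isLt; omega⟩) + a.length) ∧
        ((t₁ ++ t₂.map (· + t₁.length)).get m =
          if h : (m : ℕ) < t₁.length then t₁.get ⟨m, h⟩
          else t₂.get ⟨(m : ℕ) - t₁.length, by have := m.isLt; omega⟩ + t₁.length) := by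
      intro m
      constructor
      · by_cases h : (m : ℕ) < t₁.length
        · simp only [dif_pos h, List.get_eq_getElem]
          exact List.getElem_append_left _
        · simp only [dif_neg h, List.get_eq_getElem]
          rw [List.getElem_append_right (by omega)]
          simp
      · by_cases h : (m : ℕ) < t₁.length
        · simp only [dif_pos h, List.get_eq_getElem]
          exact List.getElem_append_left _
        · simp only [dif_neg h, List.get_eq_getElem]
          rw [List.getElem_append_right (by omega)]
          simp
    rw [(key i).1, (key j).1, (key i).2, (key j).2]
    by_cases hi' : (i : ℕ) < t₁.length <;> by_cases hj' : (j : ℕ) < t₁.length <;>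
      simp only [dif_pos, dif_neg, hi', hj', dite_true, dite_false]
    · exact hi₁ _ _
    · have h1 : a.get (s₁ ⟨i, hi'⟩) < a.length := ha _ (List.get_mem _ _)
      have h2 : t₁.get ⟨i, hi'⟩ < t₁.length := ht₁ _ (List.get_mem _ _)
      constructor <;> intro <;> omega
    · have h1 : a.get (s₁ ⟨j, hj'⟩) < a.length := ha _ (List.get_mem _ _)
      have h2 : t₁.get ⟨j, hj'⟩ < t₁.length := ht₁ _ (List.get_mem _ _)
      constructor <;> intro <;> omega
    · have := hi₂ ⟨(i:ℕ) - t₁.length, by have := i.isLt; omega⟩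
        ⟨(j:ℕ) - t₁.length, by have := j.isLt; omega⟩
      constructor <;> intro <;> omega

lemma subPattern_skewSum {t₁ t₂ a b : List ℕ}
    (ht₂ : ∀ x ∈ t₂, x < t₂.length) (hb : ∀ x ∈ b, x < b.length)
    (h₁ : SubPattern t₁ a) (h₂ : SubPattern t₂ b) :
    SubPattern (t₁.map (· + t₂.length) ++ t₂) (a.map (· + b.length) ++ b) := by
  obtain ⟨s₁, hm₁, hi₁⟩ := h₁
  obtain ⟨s₂, hm₂, hi₂⟩ := h₂
  have hT : (t₁.map (· + t₂.length) ++ t₂).length = t₁.length + t₂.length := by simp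
  have hL : (a.map (· + b.length) ++ b).length = a.length + b.length := by simp
  refine ⟨fun i => if h : (i : ℕ) < t₁.length then ⟨s₁ ⟨i, h⟩, by
      have := (s₁ ⟨i, h⟩).isLt; omega⟩
    else ⟨a.length + s₂ ⟨(i : ℕ) - t₁.length, by have := i.isLt; omega⟩, by
      have := (s₂ ⟨(i : ℕ) - t₁.length, by have := i.isLt; omega⟩).isLt; omega⟩, ?_, ?_⟩
  · intro i j hij
    have hij' : (i : ℕ) < (j : ℕ) := hij
    by_cases hi' : (i : ℕ) < t₁.length <;> by_cases hj' : (j : ℕ) < t₁.length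
    · simp only [dif_pos hi', dif_pos hj', Fin.mk_lt_mk]
      exact hm₁ (by exact hij')
    · simp only [dif_pos hi', dif_neg hj', Fin.mk_lt_mk]
      have := (s₁ ⟨i, hi'⟩).isLt; omega
    · omega
    · simp only [dif_neg hi', dif_neg hj', Fin.mk_lt_mk]
      have h2 : (⟨(i:ℕ) - t₁.length, by have := i.isLt; omega⟩ : Fin t₂.length) <
          ⟨(j:ℕ) - t₁.length, by have := j.isLt; omega⟩ := by
        rw [Fin.mk_lt_mk]; omega
      have := Fin.lt_def.mp (hm₂ h2)
      omega
  · intro i j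
    have key : ∀ m : Fin (t₁.map (· + t₂.length) ++ t₂).length,
        ((a.map (· + b.length) ++ b).get (if h : (m : ℕ) < t₁.length then ⟨s₁ ⟨m, h⟩, by
            have := (s₁ ⟨m, h⟩).isLt; omega⟩
          else ⟨a.length + s₂ ⟨(m : ℕ) - t₁.length, by have := m.isLt; omega⟩, by
            have := (s₂ ⟨(m : ℕ) - t₁.length, by have := m.isLt; omega⟩).isLt; omega⟩) =
          if h : (m : ℕ) < t₁.length then a.get (s₁ ⟨m, h⟩) + b.length
          else b.get (s₂ ⟨(m : ℕ) - t₁.length, by have := m.isLt; omega⟩)) ∧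
        ((t₁.map (· + t₂.length) ++ t₂).get m =
          if h : (m : ℕ) < t₁.length then t₁.get ⟨m, h⟩ + t₂.length
          else t₂.get ⟨(m : ℕ) - t₁.length, by have := m.isLt; omega⟩) := by
      intro m
      constructor
      · by_cases h : (m : ℕ) < t₁.length
        · simp only [dif_pos h, List.get_eq_getElem]
          rw [List.getElem_append_left (by simp)]
          simp
        · simp only [dif_neg h, List.get_eq_getElem]
          rw [List.getElem_append_right (by simp)]
          simp
      · by_cases h : (m : ℕ) < t₁.length
        · simp only [dif_pos h, List.get_eq_getElem]
          rw [List.getElem_append_left (by simp; exact h)]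
          simp
        · simp only [dif_neg h, List.get_eq_getElem]
          rw [List.getElem_append_right (by simp; omega)]
          simp
    rw [(key i).1, (key j).1, (key i).2, (key j).2]
    by_cases hi' : (i : ℕ) < t₁.length <;> by_cases hj' : (j : ℕ) < t₁.length <;>
      simp only [dif_pos, dif_neg, hi', hj', dite_true, dite_false]
    · have := hi₁ ⟨i, hi'⟩ ⟨j, hj'⟩
      constructor <;> intro <;> omega
    · have h1 : b.get (s₂ ⟨(j:ℕ) - t₁.length, by have := j.isLt; omega⟩) < b.length :=
        hb _ (List.get_mem _ _)
      have h2 : t₂.get ⟨(j:ℕ) - t₁.length, by have := j.isLt; omega⟩ < t₂.length :=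
        ht₂ _ (List.get_mem _ _)
      constructor <;> intro <;> omega
    · have h1 : b.get (s₂ ⟨(i:ℕ) - t₁.length, by have := i.isLt; omega⟩) < b.length :=
        hb _ (List.get_mem _ _)
      have h2 : t₂.get ⟨(i:ℕ) - t₁.length, by have := i.isLt; omega⟩ < t₂.length :=
        ht₂ _ (List.get_mem _ _)
      constructor <;> intro <;> omega
    · exact hi₂ _ _

lemma flatMap_range_prefix {k : ℕ} (hk : 2 ≤ k) (f : ℕ → List ℕ) :
    ∃ r, (List.range k).flatMap f = f 0 ++ (f 1 ++ r) := by
  have hr : List.range k = [0, 1] ++ (List.range k).drop 2 := by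
    conv_lhs => rw [← List.take_append_drop 2 (List.range k)]
    congr 1
    rw [List.take_range, Nat.min_eq_left hk]
    rfl
  refine ⟨((List.range k).drop 2).flatMap f, ?_⟩
  conv_lhs => rw [hr]
  simp [List.flatMap_append, List.append_assoc]

lemma kfractal_length (k n : ℕ) : (kfractal k n).length = k ^ n := by
  induction n with
  | zero => rfl
  | succ n ih =>
    rw [kfractal]
    split <;>
    · rw [List.length_flatMap]
      simp only [Function.comp_def, List.length_map, ih, List.map_const', List.sum_replicate,
        List.length_range, smul_eq_mul, pow_succ, mul_comm]

lemma kfractal_lt (k n : ℕ) : ∀ x ∈ kfractal k n, x < (kfractal k n).length := by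
  induction n with
  | zero => intro x hx; simp [kfractal] at hx; simp [kfractal, hx]
  | succ n ih =>
    intro x hx
    rw [kfractal_length, pow_succ]
    rw [kfractal] at hx
    split at hx <;>
    · simp only [List.mem_flatMap, List.mem_range, List.mem_map] at hx
      obtain ⟨i, hik, y, hy, rfl⟩ := hx
      have hy' := ih y hy
      rw [kfractal_length] at hy'
      rw [kfractal_length]
      first
      | calc y + i * k ^ n < (i + 1) * k ^ n := by rw [Nat.succ_mul]; omega
          _ ≤ k * k ^ n := Nat.mul_le_mul_right _ (by omega)
          _ = k ^ n * k := mul_comm _ _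
      | calc y + (k - 1 - i) * k ^ n < (k - 1 - i + 1) * k ^ n := by rw [Nat.succ_mul]; omega
          _ ≤ k * k ^ n := Nat.mul_le_mul_right _ (by omega)
          _ = k ^ n * k := mul_comm _ _

lemma separablePerm_lt {l : List ℕ} (h : SeparablePerm l) : ∀ x ∈ l, x < l.length := by
  induction h with
  | trivial => intro x hx; simp at hx; simp [hx]
  | directSum h₁ h₂ ih₁ ih₂ =>
    intro x hx
    simp only [List.mem_append, List.mem_map] at hx
    simp only [List.length_append, List.length_map]
    rcases hx with hx | ⟨y, hy, rfl⟩
    · have := ih₁ x hx; omega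
    · have := ih₂ y hy; omega
  | skewSum h₁ h₂ ih₁ ih₂ =>
    intro x hx
    simp only [List.mem_append, List.mem_map] at hx
    simp only [List.length_append, List.length_map]
    rcases hx with ⟨y, hy, rfl⟩ | hx
    · have := ih₁ y hy; omega
    · have := ih₂ x hx; omega

lemma kfractal_step {k : ℕ} (hk : 2 ≤ k) (n : ℕ) :
    SubPattern (kfractal k n) (kfractal k (n + 1)) := by
  rw [kfractal]
  split
  · obtain ⟨r, hr⟩ := flatMap_range_prefix hk
      (fun i => (kfractal k n).map (· + i * (kfractal k n).length))
    rw [hr]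
    exact subPattern_append_right _ (subPattern_map_add _ (subPattern_refl _))
  · obtain ⟨r, hr⟩ := flatMap_range_prefix hk
      (fun i => (kfractal k n).map (· + (k - 1 - i) * (kfractal k n).length))
    rw [hr]
    exact subPattern_append_right _ (subPattern_map_add _ (subPattern_refl _))

lemma kfractal_mono {k : ℕ} (hk : 2 ≤ k) {n m : ℕ} (h : n ≤ m) :
    SubPattern (kfractal k n) (kfractal k m) := by
  induction h with
  | refl => exact subPattern_refl _
  | step h ih => exact subPattern_trans ih (kfractal_step hk _)

lemma kfractal_directSum {k n : ℕ} (hk : 2 ≤ k) (hn : n % 2 = 0) :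
    SubPattern (kfractal k n ++ (kfractal k n).map (· + (kfractal k n).length))
      (kfractal k (n + 1)) := by
  rw [kfractal, if_pos hn]
  obtain ⟨r, hr⟩ := flatMap_range_prefix hk
    (fun i => (kfractal k n).map (· + i * (kfractal k n).length))
  rw [hr, ← List.append_assoc]
  apply subPattern_append_right
  have h01 : ((fun i => (kfractal k n).map (· + i * (kfractal k n).length)) 0 ++
      (fun i => (kfractal k n).map (· + i * (kfractal k n).length)) 1)
      = kfractal k n ++ (kfractal k n).map (· + (kfractal k n).length) := by
    simp
  rw [h01]
  exact subPattern_refl _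

lemma kfractal_skewSum {k n : ℕ} (hk : 2 ≤ k) (hn : n % 2 = 1) :
    SubPattern ((kfractal k n).map (· + (kfractal k n).length) ++ kfractal k n)
      (kfractal k (n + 1)) := by
  rw [kfractal, if_neg (by omega)]
  obtain ⟨r, hr⟩ := flatMap_range_prefix hk
    (fun i => (kfractal k n).map (· + (k - 1 - i) * (kfractal k n).length))
  rw [hr, ← List.append_assoc]
  apply subPattern_append_right
  set F := kfractal k n with hF
  set L := F.length with hL
  have hmul : (k - 1) * L = L + (k - 2) * L := by
    rw [show k - 1 = (k - 2) + 1 from by omega, Nat.succ_mul]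
    exact Nat.add_comm _ _
  have key : ((fun i => F.map (· + (k - 1 - i) * L)) 0 ++
      (fun i => F.map (· + (k - 1 - i) * L)) 1)
      = (F.map (· + L) ++ F).map (· + (k - 2) * L) := by
    beta_reduce
    rw [List.map_append, List.map_map]
    congr 1
    · congr 1
      funext x
      simp only [Function.comp_apply, Nat.sub_zero, hmul]
      exact (Nat.add_assoc x L _).symm
  rw [key]
  exact subPattern_map_add _ (subPattern_refl _)

/-- For every `k ≥ 2`, the `k`-fractals form a basis for the separable permutations:
every separable permutation is a sub-pattern of some `k`-fractal. -/
theorem kfractal_basis_for_separable (k : ℕ) (hk : 2 ≤ k) (l : List ℕ)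
    (hl : SeparablePerm l) : ∃ n : ℕ, SubPattern l (kfractal k n) := by
  induction hl with
  | trivial => exact ⟨0, subPattern_refl _⟩
  | @directSum l₁ l₂ h₁ h₂ ih₁ ih₂ =>
    obtain ⟨n₁, hp₁⟩ := ih₁
    obtain ⟨n₂, hp₂⟩ := ih₂
    have hm : (2 * (n₁ + n₂)) % 2 = 0 := by omega
    have q₁ : SubPattern l₁ (kfractal k (2 * (n₁ + n₂))) :=
      subPattern_trans hp₁ (kfractal_mono hk (by omega))
    have q₂ : SubPattern l₂ (kfractal k (2 * (n₁ + n₂))) :=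
      subPattern_trans hp₂ (kfractal_mono hk (by omega))
    exact ⟨2 * (n₁ + n₂) + 1, subPattern_trans
      (subPattern_directSum (separablePerm_lt h₁) (kfractal_lt k _) q₁ q₂)
      (kfractal_directSum hk hm)⟩
  | @skewSum l₁ l₂ h₁ h₂ ih₁ ih₂ =>
    obtain ⟨n₁, hp₁⟩ := ih₁
    obtain ⟨n₂, hp₂⟩ := ih₂
    have hm : (2 * (n₁ + n₂) + 1) % 2 = 1 := by omega
    have q₁ : SubPattern l₁ (kfractal k (2 * (n₁ + n₂) + 1)) :=
      subPattern_trans hp₁ (kfractal_mono hk (by omega))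
    have q₂ : SubPattern l₂ (kfractal k (2 * (n₁ + n₂) + 1)) :=
      subPattern_trans hp₂ (kfractal_mono hk (by omega))
    exact ⟨2 * (n₁ + n₂) + 1 + 1, subPattern_trans
      (subPattern_skewSum (separablePerm_lt h₂) (kfractal_lt k _) q₁ q₂)
      (kfractal_skewSum hk hm)⟩
end

section
/- Fix k, i, n ≥ 1, a coloring f : [ℕ]² → 2, an infinite set X ⊆ ℕ and a color c < 2. Let F ⊆ ℕ be a finite set f-realizing the i-fractal of dimension n, with fractal decomposition F₀ < ... < F_{i−1} into i blocks each f-realizing the i-fractal of dimension n−1. If F is (f,k)-good for color c in X, then at most k−1 of the blocks F₀, ..., F_{i−1} are (f,k)-bad for color c in X. -/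
lemma len_flatMap {α : Type*} (g : ℕ → List α) (L : ℕ) (hL : ∀ t, (g t).length = L) :
    ∀ m, ((List.range m).flatMap g).length = m * L := by
  intro m
  induction m with
  | zero => simp
  | succ m ih =>
    rw [List.range_succ, List.flatMap_append, List.length_append, ih]
    simp [hL, Nat.succ_mul]

lemma getElem_flatMap_range {α : Type*} (g : ℕ → List α) (L : ℕ) (hL : ∀ t, (g t).length = L)
    {m j r : ℕ} (hj : j < m) (hr : r < L) (h : j * L + r < ((List.range m).flatMap g).length) :
    ((List.range m).flatMap g)[j * L + r] = (g j)[r]'(by rw [hL]; exact hr) := by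
  induction m with
  | zero => omega
  | succ m ih =>
    rw [List.getElem_of_eq (by rw [List.range_succ, List.flatMap_append])]
    rcases Nat.lt_or_ge j m with hj' | hj'
    · rw [List.getElem_append_left (by
        rw [len_flatMap g L hL]
        calc j * L + r < j * L + L := by omega
          _ = (j+1) * L := by ring
          _ ≤ m * L := Nat.mul_le_mul_right L (by omega))]
      exact ih hj' _
    · have hjm : j = m := by omega
      subst hjm
      rw [List.getElem_append_right (by rw [len_flatMap g L hL]; omega)]
      simp [len_flatMap g L hL]

lemma kf_len (k : ℕ) : ∀ n, (kfractal k n).length = k ^ n := by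
  intro n
  induction n with
  | zero => simp [kfractal]
  | succ n ih =>
    rw [kfractal]
    split <;>
    · rw [len_flatMap _ (k ^ n) (fun t => by simp [ih])]
      ring

lemma kf_get (k n : ℕ) {j r : ℕ} (hj : j < k) (hr : r < k ^ n)
    (h : j * k ^ n + r < (kfractal k (n + 1)).length) :
    (kfractal k (n + 1))[j * k ^ n + r] =
      (kfractal k n)[r]'(by rw [kf_len]; exact hr) +
        (if n % 2 = 0 then j else k - 1 - j) * k ^ n := by
  have hlen : ∀ (c : ℕ) (t : ℕ),
      ((kfractal k n).map (· + c * (kfractal k n).length)).length = k ^ n := by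
    intro c t; simp [kf_len]
  by_cases hpar : n % 2 = 0
  · have he : kfractal k (n + 1) =
        (List.range k).flatMap fun t => (kfractal k n).map (· + t * (kfractal k n).length) := by
      rw [kfractal, if_pos hpar]
    rw [List.getElem_of_eq he,
      getElem_flatMap_range _ (k ^ n) (fun t => by simp [kf_len]) hj hr]
    simp [kf_len, hpar]
  · have he : kfractal k (n + 1) =
        (List.range k).flatMap fun t =>
          (kfractal k n).map (· + (k - 1 - t) * (kfractal k n).length) := by
      rw [kfractal, if_neg hpar]
    rw [List.getElem_of_eq he,
      getElem_flatMap_range _ (k ^ n) (fun t => by simp [kf_len]) hj hr]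
    simp [kf_len, hpar]

lemma kf_bound (k : ℕ) : ∀ n, ∀ x ∈ kfractal k n, x < k ^ n := by
  intro n
  induction n with
  | zero => simp [kfractal]
  | succ n ih =>
    intro x hx
    rw [kfractal] at hx
    have key : ∀ t u : ℕ, t < k → u ∈ kfractal k n → u + t * k ^ n < k ^ (n + 1) := by
      intro t u ht hu
      have hu' := ih u hu
      calc u + t * k ^ n < k ^ n + t * k ^ n := by omega
        _ = (t + 1) * k ^ n := by ring
        _ ≤ k * k ^ n := Nat.mul_le_mul_right _ (by omega)
        _ = k ^ (n + 1) := by ring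
    split at hx <;>
    · simp only [List.mem_flatMap, List.mem_range, List.mem_map, kf_len] at hx
      obtain ⟨t, ht, u, hu, rfl⟩ := hx
      first
        | exact key t u ht hu
        | exact key (k - 1 - t) u (by omega) hu

lemma kf_get' (k n : ℕ) (hk : 1 ≤ k) {a : ℕ} (ha : a < k ^ (n + 1)) :
    (kfractal k (n + 1))[a]'(by rw [kf_len]; exact ha) =
      (kfractal k n)[a % k ^ n]'(by rw [kf_len]; exact Nat.mod_lt _ (Nat.pow_pos hk)) +
        (if n % 2 = 0 then a / k ^ n else k - 1 - a / k ^ n) * k ^ n := by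
  have hL : 0 < k ^ n := Nat.pow_pos hk
  have hj : a / k ^ n < k := by
    rw [Nat.div_lt_iff_lt_mul hL]
    calc a < k ^ (n + 1) := ha
      _ = k * k ^ n := by ring
  have h := kf_get k n hj (Nat.mod_lt a hL)
    (by rw [kf_len, Nat.div_add_mod']; exact ha)
  rw [← h]
  congr 1
  exact (Nat.div_add_mod' a (k ^ n)).symm

lemma kf_lt_same (k n : ℕ) (hk : 1 ≤ k) {a b : ℕ} (ha : a < k ^ (n + 1)) (hb : b < k ^ (n + 1))
    (hs : a / k ^ n = b / k ^ n) :
    ((kfractal k (n + 1))[a]'(by rw [kf_len]; exact ha) <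
        (kfractal k (n + 1))[b]'(by rw [kf_len]; exact hb)) ↔
      ((kfractal k n)[a % k ^ n]'(by rw [kf_len]; exact Nat.mod_lt _ (Nat.pow_pos hk)) <
        (kfractal k n)[b % k ^ n]'(by rw [kf_len]; exact Nat.mod_lt _ (Nat.pow_pos hk))) := by
  rw [kf_get' k n hk ha, kf_get' k n hk hb, hs]
  omega

lemma kf_lt_cross (k n : ℕ) (hk : 1 ≤ k) {a b : ℕ} (ha : a < k ^ (n + 1)) (hb : b < k ^ (n + 1))
    (hs : a / k ^ n < b / k ^ n) :
    ((kfractal k (n + 1))[a]'(by rw [kf_len]; exact ha) <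
        (kfractal k (n + 1))[b]'(by rw [kf_len]; exact hb)) ↔ n % 2 = 0 := by
  have hL : 0 < k ^ n := Nat.pow_pos hk
  have hu : (kfractal k n)[a % k ^ n]'(by rw [kf_len]; exact Nat.mod_lt _ hL) < k ^ n :=
    kf_bound k n _ (List.getElem_mem _)
  have hv : (kfractal k n)[b % k ^ n]'(by rw [kf_len]; exact Nat.mod_lt _ hL) < k ^ n :=
    kf_bound k n _ (List.getElem_mem _)
  have hbk : b / k ^ n < k := by
    rw [Nat.div_lt_iff_lt_mul hL]
    calc b < k ^ (n + 1) := hb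
      _ = k * k ^ n := by ring
  rw [kf_get' k n hk ha, kf_get' k n hk hb]
  by_cases hpar : n % 2 = 0
  · rw [if_pos hpar, if_pos hpar]
    refine iff_of_true ?_ hpar
    calc _ < k ^ n + a / k ^ n * k ^ n := by omega
      _ = (a / k ^ n + 1) * k ^ n := by ring
      _ ≤ b / k ^ n * k ^ n := Nat.mul_le_mul_right _ (by omega)
      _ ≤ _ := Nat.le_add_left _ _
  · rw [if_neg hpar, if_neg hpar]
    refine iff_of_false ?_ hpar
    have key : (kfractal k n)[b % k ^ n]'(by rw [kf_len]; exact Nat.mod_lt _ hL) +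
        (k - 1 - b / k ^ n) * k ^ n < (k - 1 - a / k ^ n) * k ^ n := by
      calc _ < k ^ n + (k - 1 - b / k ^ n) * k ^ n := by omega
        _ = (k - 1 - b / k ^ n + 1) * k ^ n := by ring
        _ ≤ (k - 1 - a / k ^ n) * k ^ n := Nat.mul_le_mul_right _ (by omega)
    omega
/-- The finite set `F` `f`-realizes the permutation pattern `t`: listing `F` in increasing
order as `s 0 < s 1 < ...`, the color `f (s a) (s b)` is `0` exactly when `t a < t b`. -/
def RealizesPerm (f : ℕ → ℕ → Fin 2) (t : List ℕ) (F : Finset ℕ) : Prop :=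
  ∃ s : Fin t.length → ℕ, StrictMono s ∧ F = Finset.image s Finset.univ ∧
    ∀ a b : Fin t.length, a < b → (f (s a) (s b) = 0 ↔ t.get a < t.get b)

lemma realizes_card {f : ℕ → ℕ → Fin 2} {t : List ℕ} {F : Finset ℕ}
    (h : RealizesPerm f t F) : F.card = t.length := by
  obtain ⟨s, hmono, himg, -⟩ := h
  rw [himg, Finset.card_image_of_injective _ hmono.injective, Finset.card_univ,
    Fintype.card_fin]

lemma realizes_pattern {f : ℕ → ℕ → Fin 2} {t : List ℕ} {F : Finset ℕ}
    (h : RealizesPerm f t F) (hc : F.card = t.length) :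
    ∀ a b : Fin t.length, a < b →
      (f (F.orderEmbOfFin hc a) (F.orderEmbOfFin hc b) = 0 ↔ t.get a < t.get b) := by
  obtain ⟨s, hmono, himg, hpat⟩ := h
  have hs : s = ⇑(F.orderEmbOfFin hc) :=
    Finset.orderEmbOfFin_unique hc
      (fun x => by rw [himg]; exact Finset.mem_image_of_mem s (Finset.mem_univ x)) hmono
  rw [← hs]
  exact hpat

lemma cross_color (i m : ℕ) (hi : 1 ≤ i) (f : ℕ → ℕ → Fin 2) (F : Finset ℕ)
    (hF : RealizesPerm f (kfractal i (m + 1)) F) (B : Fin i → Finset ℕ)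
    (hBcard : ∀ j, (B j).card = (kfractal i m).length)
    (hBord : ∀ j j' : Fin i, j < j' → ∀ x ∈ B j, ∀ y ∈ B j', x < y)
    (hBunion : F = Finset.univ.biUnion B) :
    ∀ j j' : Fin i, j < j' → ∀ x ∈ B j, ∀ y ∈ B j', (f x y = 0 ↔ m % 2 = 0) := by
  have hL : (kfractal i m).length = i ^ m := kf_len i m
  have hLpos : 0 < i ^ m := Nat.pow_pos hi
  have hN : (kfractal i (m + 1)).length = i * i ^ m := by
    rw [kf_len]; ring
  have hc : F.card = (kfractal i (m + 1)).length := realizes_card hF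
  have hpat := realizes_pattern hF hc
  -- the "glued" enumeration
  have hdivlt : ∀ p : Fin (kfractal i (m + 1)).length, (p : ℕ) / i ^ m < i := by
    intro p
    rw [Nat.div_lt_iff_lt_mul hLpos]
    have := lt_of_lt_of_eq p.2 hN
    omega
  set τ : Fin (kfractal i (m + 1)).length → ℕ := fun p =>
    (B ⟨(p : ℕ) / i ^ m, hdivlt p⟩).orderEmbOfFin (hBcard _)
      ⟨(p : ℕ) % i ^ m, by rw [hL]; exact Nat.mod_lt _ hLpos⟩ with hτdef
  have hτmem : ∀ p, τ p ∈ F := by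
    intro p
    rw [hBunion]
    exact Finset.mem_biUnion.2 ⟨_, Finset.mem_univ _, Finset.orderEmbOfFin_mem _ _ _⟩
  have hτmono : StrictMono τ := by
    intro u v huv
    have h1 := Nat.div_add_mod' (u : ℕ) (i ^ m)
    have h2 := Nat.div_add_mod' (v : ℕ) (i ^ m)
    rcases Nat.lt_or_ge ((u : ℕ) / i ^ m) ((v : ℕ) / i ^ m) with hd | hd
    · exact hBord _ _ hd _ (Finset.orderEmbOfFin_mem _ _ _) _ (Finset.orderEmbOfFin_mem _ _ _)
    · have hde : (u : ℕ) / i ^ m = (v : ℕ) / i ^ m := by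
        have : (u : ℕ) / i ^ m ≤ (v : ℕ) / i ^ m := Nat.div_le_div_right (le_of_lt (show (u : ℕ) < (v : ℕ) from huv))
        omega
      have hmlt : (u : ℕ) % i ^ m < (v : ℕ) % i ^ m := by
        rw [hde] at h1
        have huv' : (u : ℕ) < (v : ℕ) := huv
        omega
      rw [hτdef]
      simp only
      have hfin : (⟨(u : ℕ) / i ^ m, hdivlt u⟩ : Fin i) = ⟨(v : ℕ) / i ^ m, hdivlt v⟩ :=
        Fin.ext hde
      rw [hfin]
      exact ((B _).orderEmbOfFin (hBcard _)).strictMono hmlt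
  have hτ : τ = ⇑(F.orderEmbOfFin hc) := Finset.orderEmbOfFin_unique hc hτmem hτmono
  -- now the statement
  intro j j' hjj' x hx y hy
  obtain ⟨a, rfl⟩ : ∃ a : Fin (kfractal i m).length,
      (B j).orderEmbOfFin (hBcard j) a = x := by
    have : x ∈ Set.range ((B j).orderEmbOfFin (hBcard j)) := by
      rw [Finset.range_orderEmbOfFin]; exact_mod_cast hx
    exact this
  obtain ⟨b, rfl⟩ : ∃ b : Fin (kfractal i m).length,
      (B j').orderEmbOfFin (hBcard j') b = y := by
    have : y ∈ Set.range ((B j').orderEmbOfFin (hBcard j')) := by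
      rw [Finset.range_orderEmbOfFin]; exact_mod_cast hy
    exact this
  have ha : (a : ℕ) < i ^ m := by rw [← hL]; exact a.2
  have hb : (b : ℕ) < i ^ m := by rw [← hL]; exact b.2
  set p : ℕ := i ^ m * (j : ℕ) + (a : ℕ) with hpdef
  set q : ℕ := i ^ m * (j' : ℕ) + (b : ℕ) with hqdef
  have hpdiv : p / i ^ m = (j : ℕ) := by
    rw [hpdef, Nat.mul_add_div hLpos, Nat.div_eq_of_lt ha, Nat.add_zero]
  have hqdiv : q / i ^ m = (j' : ℕ) := by
    rw [hqdef, Nat.mul_add_div hLpos, Nat.div_eq_of_lt hb, Nat.add_zero]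
  have hpmod : p % i ^ m = (a : ℕ) := by
    rw [hpdef, Nat.mul_add_mod, Nat.mod_eq_of_lt ha]
  have hqmod : q % i ^ m = (b : ℕ) := by
    rw [hqdef, Nat.mul_add_mod, Nat.mod_eq_of_lt hb]
  have hplt : p < i ^ (m + 1) := by
    have : (j : ℕ) + 1 ≤ i := j.2
    have hexp : i ^ m * ((j : ℕ) + 1) = i ^ m * (j : ℕ) + i ^ m := by ring
    calc p < i ^ m * ((j : ℕ) + 1) := by omega
      _ ≤ i ^ m * i := Nat.mul_le_mul_left _ this
      _ = i ^ (m + 1) := by ring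
  have hqlt : q < i ^ (m + 1) := by
    have : (j' : ℕ) + 1 ≤ i := j'.2
    have hexp : i ^ m * ((j' : ℕ) + 1) = i ^ m * (j' : ℕ) + i ^ m := by ring
    calc q < i ^ m * ((j' : ℕ) + 1) := by omega
      _ ≤ i ^ m * i := Nat.mul_le_mul_left _ this
      _ = i ^ (m + 1) := by ring
  have hp : p < (kfractal i (m + 1)).length := by rw [kf_len]; exact hplt
  have hq : q < (kfractal i (m + 1)).length := by rw [kf_len]; exact hqlt
  have hpq : (⟨p, hp⟩ : Fin (kfractal i (m + 1)).length) < ⟨q, hq⟩ := by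
    have hjlt : (j : ℕ) < (j' : ℕ) := hjj'
    have hexp : i ^ m * ((j : ℕ) + 1) = i ^ m * (j : ℕ) + i ^ m := by ring
    show p < q
    calc p < i ^ m * ((j : ℕ) + 1) := by omega
      _ ≤ i ^ m * (j' : ℕ) := Nat.mul_le_mul_left _ (by omega)
      _ ≤ q := Nat.le_add_right _ _
  have hτp : τ ⟨p, hp⟩ = (B j).orderEmbOfFin (hBcard j) a := by
    rw [hτdef]
    simp only
    have h1 : (⟨p / i ^ m, hdivlt ⟨p, hp⟩⟩ : Fin i) = j := Fin.ext hpdiv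
    have h2 : (⟨p % i ^ m, by rw [hL]; exact Nat.mod_lt _ hLpos⟩ :
        Fin (kfractal i m).length) = a := Fin.ext hpmod
    rw [h1, h2]
  have hτq : τ ⟨q, hq⟩ = (B j').orderEmbOfFin (hBcard j') b := by
    rw [hτdef]
    simp only
    have h1 : (⟨q / i ^ m, hdivlt ⟨q, hq⟩⟩ : Fin i) = j' := Fin.ext hqdiv
    have h2 : (⟨q % i ^ m, by rw [hL]; exact Nat.mod_lt _ hLpos⟩ :
        Fin (kfractal i m).length) = b := Fin.ext hqmod
    rw [h1, h2]
  have hpat' := hpat ⟨p, hp⟩ ⟨q, hq⟩ hpq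
  rw [← hτ, hτp, hτq] at hpat'
  rw [hpat']
  have hcross := kf_lt_cross i m hi hplt hqlt (by rw [hpdiv, hqdiv]; exact hjj')
  simp only [List.get_eq_getElem]
  exact hcross
/-- `x` has limit `c` in the infinite set `X`: `f x y = c` for all but finitely many `y ∈ X`. -/
def HasLimit (f : ℕ → ℕ → Fin 2) (x : ℕ) (c : Fin 2) (X : Set ℕ) : Prop :=
  {y ∈ X | f x y ≠ c}.Finite

/-- A finite set `F` (`f`-realizing some `i`-fractal of dimension `n`) is `(f,k)`-good for
color `c` in `X` if no subset of `F` `f`-realizes the `k`-fractal of dimension `n` with all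
its elements having limit `1 - c` in `X`. -/
def FracGood (f : ℕ → ℕ → Fin 2) (k n : ℕ) (c : Fin 2) (X : Set ℕ) (F : Finset ℕ) : Prop :=
  ¬ ∃ G : Finset ℕ, G ⊆ F ∧ RealizesPerm f (kfractal k n) G ∧
      ∀ x ∈ G, HasLimit f x (1 - c) X

/-- If `F` realizes the `i`-fractal of dimension `n` with fractal decomposition
`B 0 < ... < B (i-1)` and `F` is `(f,k)`-good for color `c` in `X`, then at most `k - 1`
of the blocks are `(f,k)`-bad for color `c` in `X`. -/
theorem good_fractal_few_bad_blocks (k i n : ℕ) (hk : 1 ≤ k) (hi : 1 ≤ i) (hn : 1 ≤ n)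
    (f : ℕ → ℕ → Fin 2) (X : Set ℕ) (hX : X.Infinite) (c : Fin 2)
    (F : Finset ℕ) (hF : RealizesPerm f (kfractal i n) F)
    (B : Fin i → Finset ℕ)
    (hBreal : ∀ j, RealizesPerm f (kfractal i (n - 1)) (B j))
    (hBord : ∀ j j' : Fin i, j < j' → ∀ x ∈ B j, ∀ y ∈ B j', x < y)
    (hBunion : F = Finset.univ.biUnion B)
    (hgood : FracGood f k n c X F) :
    {j : Fin i | ¬ FracGood f k (n - 1) c X (B j)}.ncard ≤ k - 1 := by
  obtain ⟨m, rfl⟩ : ∃ m, n = m + 1 := ⟨n - 1, by omega⟩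
  simp only [Nat.add_sub_cancel] at hBreal ⊢
  by_contra hcon
  push_neg at hcon
  set S := {j : Fin i | ¬ FracGood f k m c X (B j)} with hSdef
  have hSfin : S.Finite := Set.toFinite _
  have hk' : k ≤ hSfin.toFinset.card := by
    rw [← Set.ncard_eq_toFinset_card _ hSfin]
    omega
  obtain ⟨T, hTsub, hTcard⟩ := Finset.exists_subset_card_eq hk'
  set e := T.orderEmbOfFin hTcard with hedef
  have heS : ∀ t, ¬ FracGood f k m c X (B (e t)) := by
    intro t
    have h1 : e t ∈ T := Finset.orderEmbOfFin_mem _ _ _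
    have h2 := hTsub h1
    rw [Set.Finite.mem_toFinset] at h2
    exact h2
  choose G hGsub hGreal hGlim using fun t => not_not.mp (heS t)
  have hNk : (kfractal k m).length = k ^ m := kf_len k m
  have hLpos : 0 < k ^ m := Nat.pow_pos hk
  have hGcard : ∀ t, (G t).card = (kfractal k m).length := fun t => realizes_card (hGreal t)
  set g : (t : Fin k) → Fin (kfractal k m).length → ℕ :=
    fun t => ⇑((G t).orderEmbOfFin (hGcard t)) with hgdef
  have hgpat : ∀ t, ∀ a b : Fin (kfractal k m).length, a < b →
      (f (g t a) (g t b) = 0 ↔ (kfractal k m).get a < (kfractal k m).get b) :=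
    fun t => realizes_pattern (hGreal t) _
  have hgmem : ∀ t a, g t a ∈ G t := fun t a => Finset.orderEmbOfFin_mem _ _ _
  have hBcard : ∀ j, (B j).card = (kfractal i m).length := fun j => realizes_card (hBreal j)
  have hcc := cross_color i m hi f F hF B hBcard hBord hBunion
  have hGcc : ∀ t t' : Fin k, t < t' → ∀ x ∈ G t, ∀ y ∈ G t', (f x y = 0 ↔ m % 2 = 0) := by
    intro t t' htt' x hx y hy
    exact hcc (e t) (e t') (e.strictMono htt') x (hGsub t hx) y (hGsub t' hy)
  have hGord : ∀ t t' : Fin k, t < t' → ∀ x ∈ G t, ∀ y ∈ G t', x < y :=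
    fun t t' h x hx y hy => hBord _ _ (e.strictMono h) x (hGsub t hx) y (hGsub t' hy)
  apply hgood
  refine ⟨Finset.univ.biUnion G, ?_, ?_, ?_⟩
  · intro x hx
    obtain ⟨t, -, hx⟩ := Finset.mem_biUnion.mp hx
    rw [hBunion]
    exact Finset.mem_biUnion.2 ⟨e t, Finset.mem_univ _, hGsub t hx⟩
  · -- realizes the k-fractal of dimension m + 1
    have hNlen : (kfractal k (m + 1)).length = k * k ^ m := by rw [kf_len]; ring
    have hdivlt : ∀ p : Fin (kfractal k (m + 1)).length, (p : ℕ) / k ^ m < k := by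
      intro p
      rw [Nat.div_lt_iff_lt_mul hLpos]
      have := lt_of_lt_of_eq p.2 hNlen
      omega
    set s : Fin (kfractal k (m + 1)).length → ℕ := fun p =>
      g ⟨(p : ℕ) / k ^ m, hdivlt p⟩ ⟨(p : ℕ) % k ^ m, lt_of_lt_of_eq (Nat.mod_lt _ hLpos) hNk.symm⟩
      with hsdef
    have hsmono : StrictMono s := by
      intro u v huv
      have h1 := Nat.div_add_mod' (u : ℕ) (k ^ m)
      have h2 := Nat.div_add_mod' (v : ℕ) (k ^ m)
      rcases Nat.lt_or_ge ((u : ℕ) / k ^ m) ((v : ℕ) / k ^ m) with hd | hd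
      · exact hGord _ _ hd _ (hgmem _ _) _ (hgmem _ _)
      · have hde : (u : ℕ) / k ^ m = (v : ℕ) / k ^ m := by
          have : (u : ℕ) / k ^ m ≤ (v : ℕ) / k ^ m :=
            Nat.div_le_div_right (le_of_lt (show (u : ℕ) < (v : ℕ) from huv))
          omega
        have hmlt : (u : ℕ) % k ^ m < (v : ℕ) % k ^ m := by
          rw [hde] at h1
          have huv' : (u : ℕ) < (v : ℕ) := huv
          omega
        rw [hsdef]
        simp only
        have hfin : (⟨(u : ℕ) / k ^ m, hdivlt u⟩ : Fin k) = ⟨(v : ℕ) / k ^ m, hdivlt v⟩ :=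
          Fin.ext hde
        rw [hfin]
        exact ((G _).orderEmbOfFin (hGcard _)).strictMono hmlt
    refine ⟨s, hsmono, ?_, ?_⟩
    · -- image
      ext x
      simp only [Finset.mem_biUnion, Finset.mem_image, Finset.mem_univ, true_and]
      constructor
      · rintro ⟨t, hx⟩
        obtain ⟨a, rfl⟩ : ∃ a : Fin (kfractal k m).length, g t a = x := by
          have : x ∈ Set.range ((G t).orderEmbOfFin (hGcard t)) := by
            rw [Finset.range_orderEmbOfFin]; exact_mod_cast hx
          exact this
        have ha : (a : ℕ) < k ^ m := lt_of_lt_of_eq a.2 hNk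
        have hp : k ^ m * (t : ℕ) + (a : ℕ) < (kfractal k (m + 1)).length := by
          rw [hNlen]
          have h1 : (t : ℕ) + 1 ≤ k := t.2
          have h2 : k ^ m * ((t : ℕ) + 1) = k ^ m * (t : ℕ) + k ^ m := by ring
          have h3 : k ^ m * ((t : ℕ) + 1) ≤ k ^ m * k := Nat.mul_le_mul_left _ h1
          have h4 : k ^ m * k = k * k ^ m := by ring
          omega
        refine ⟨⟨k ^ m * (t : ℕ) + (a : ℕ), hp⟩, ?_⟩
        rw [hsdef]
        simp only
        have hdiv : (k ^ m * (t : ℕ) + (a : ℕ)) / k ^ m = (t : ℕ) := by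
          rw [Nat.mul_add_div hLpos, Nat.div_eq_of_lt ha, Nat.add_zero]
        have hmod : (k ^ m * (t : ℕ) + (a : ℕ)) % k ^ m = (a : ℕ) := by
          rw [Nat.mul_add_mod, Nat.mod_eq_of_lt ha]
        have hf1 : (⟨(k ^ m * (t : ℕ) + (a : ℕ)) / k ^ m, hdivlt ⟨k ^ m * (t : ℕ) + (a : ℕ), hp⟩⟩ : Fin k) = t := Fin.ext hdiv
        have hf2 : (⟨(k ^ m * (t : ℕ) + (a : ℕ)) % k ^ m, lt_of_lt_of_eq (Nat.mod_lt _ hLpos) hNk.symm⟩ :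
            Fin (kfractal k m).length) = a := Fin.ext hmod
        rw [hf1, hf2]
      · rintro ⟨p, rfl⟩
        exact ⟨_, hgmem _ _⟩
    · -- pattern
      intro a b hab
      have hab' : (a : ℕ) < (b : ℕ) := hab
      have ha2 : (a : ℕ) < k ^ (m + 1) := lt_of_lt_of_eq a.2 (kf_len k (m + 1))
      have hb2 : (b : ℕ) < k ^ (m + 1) := lt_of_lt_of_eq b.2 (kf_len k (m + 1))
      have hdle : (a : ℕ) / k ^ m ≤ (b : ℕ) / k ^ m :=
        Nat.div_le_div_right (le_of_lt hab')
      rcases Nat.lt_or_ge ((a : ℕ) / k ^ m) ((b : ℕ) / k ^ m) with hd | hd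
      · -- cross block
        have hcolor : f (s a) (s b) = 0 ↔ m % 2 = 0 :=
          hGcc _ _ hd _ (hgmem _ _) _ (hgmem _ _)
        have hget := kf_lt_cross k m hk ha2 hb2 hd
        rw [hcolor]
        simp only [List.get_eq_getElem]
        exact hget.symm
      · -- same block
        have hde : (a : ℕ) / k ^ m = (b : ℕ) / k ^ m := by omega
        have h1 := Nat.div_add_mod' (a : ℕ) (k ^ m)
        have h2 := Nat.div_add_mod' (b : ℕ) (k ^ m)
        have hmlt : (a : ℕ) % k ^ m < (b : ℕ) % k ^ m := by
          rw [hde] at h1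
          omega
        have hcolor := hgpat ⟨(a : ℕ) / k ^ m, hdivlt a⟩
          ⟨(a : ℕ) % k ^ m, lt_of_lt_of_eq (Nat.mod_lt _ hLpos) hNk.symm⟩
          ⟨(b : ℕ) % k ^ m, lt_of_lt_of_eq (Nat.mod_lt _ hLpos) hNk.symm⟩
          (by exact hmlt)
        have hget := kf_lt_same k m hk ha2 hb2 hde
        have hsa : s a = g ⟨(a : ℕ) / k ^ m, hdivlt a⟩
            ⟨(a : ℕ) % k ^ m, lt_of_lt_of_eq (Nat.mod_lt _ hLpos) hNk.symm⟩ := rfl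
        have hsb : s b = g ⟨(b : ℕ) / k ^ m, hdivlt b⟩
            ⟨(b : ℕ) % k ^ m, lt_of_lt_of_eq (Nat.mod_lt _ hLpos) hNk.symm⟩ := rfl
        have hfin : (⟨(b : ℕ) / k ^ m, hdivlt b⟩ : Fin k) = ⟨(a : ℕ) / k ^ m, hdivlt a⟩ :=
          Fin.ext hde.symm
        rw [hsa, hsb, hfin]
        rw [hcolor]
        simp only [List.get_eq_getElem]
        exact hget.symm
  · intro x hx
    obtain ⟨t, -, hx⟩ := Finset.mem_biUnion.mp hx
    exact hGlim t x hx
end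

section
/- Let f : [ℕ]² → 2 be a computable coloring and k ∈ ℕ such that no set of k elements is f-homogeneous for the color 0. Then there exists an infinite computable set that is f-homogeneous for the color 1. -/
namespace UnbalancedRamsey

/-- Check, given a list `l` of booleans (membership flags for `0..l.length-1`)
and a number `n`, that `f x n = 1` for every flagged `x < n`. -/
def chk (f : ℕ → ℕ → Fin 2) : List Bool × ℕ → Bool := fun p =>
  Nat.rec true (fun x IH => IH && ((!(p.1.getD x false)) || decide (f x p.2 = 1))) p.2

/-- The list of membership flags for `0..n-1`. -/
def seqA (f : ℕ → ℕ → Fin 2) (s : ℕ → Bool) : ℕ → List Bool := fun n =>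
  Nat.rec [] (fun m IH => IH ++ [s m && chk f (IH, m)]) n

/-- Characteristic function of the greedily constructed set. -/
def chi (f : ℕ → ℕ → Fin 2) (s : ℕ → Bool) (n : ℕ) : Bool :=
  (seqA f s (n + 1)).getD n false

theorem chk_iff (f : ℕ → ℕ → Fin 2) (l : List Bool) (m : ℕ) :
    chk f (l, m) = true ↔ ∀ x < m, l.getD x false = true → f x m = 1 := by
  show (Nat.rec true (fun x IH => IH && ((!(l.getD x false)) || decide (f x m = 1))) m : Bool)
      = true ↔ _
  have : ∀ j : ℕ,
      (Nat.rec true (fun x IH => IH && ((!(l.getD x false)) || decide (f x m = 1))) j : Bool)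
      = true ↔ ∀ x < j, l.getD x false = true → f x m = 1 := by
    intro j
    induction j with
    | zero => simp
    | succ j ih =>
      simp only [Nat.lt_succ_iff_lt_or_eq, Bool.and_eq_true, Bool.or_eq_true, Bool.not_eq_true',
        decide_eq_true_iff, ih]
      constructor
      · rintro ⟨h1, h2⟩ x (hx | rfl) hl
        · exact h1 x hx hl
        · rcases h2 with h | h
          · rw [hl] at h; cases h
          · exact h
      · intro h
        refine ⟨fun x hx hl => h x (Or.inl hx) hl, ?_⟩
        cases hgd : l.getD j false
        · exact Or.inl rfl
        · exact Or.inr (h j (Or.inr rfl) hgd)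
  exact this m

theorem seqA_succ (f : ℕ → ℕ → Fin 2) (s : ℕ → Bool) (n : ℕ) :
    seqA f s (n + 1) = seqA f s n ++ [s n && chk f (seqA f s n, n)] := rfl

theorem seqA_length (f : ℕ → ℕ → Fin 2) (s : ℕ → Bool) (n : ℕ) :
    (seqA f s n).length = n := by
  induction n with
  | zero => rfl
  | succ n ih => rw [seqA_succ]; simp [ih]

theorem seqA_getD (f : ℕ → ℕ → Fin 2) (s : ℕ → Bool) {x n m : ℕ} (hx : x < n) (h : n ≤ m) :
    (seqA f s m).getD x false = (seqA f s n).getD x false := by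
  induction m, h using Nat.le_induction with
  | base => rfl
  | succ m hm ih =>
    rw [seqA_succ, List.getD_append _ _ _ _ (by rw [seqA_length]; omega), ih]

theorem chi_getD (f : ℕ → ℕ → Fin 2) (s : ℕ → Bool) {x m : ℕ} (hx : x < m) :
    (seqA f s m).getD x false = chi f s x := by
  rw [seqA_getD f s (Nat.lt_succ_self x) hx]; rfl

theorem chi_iff (f : ℕ → ℕ → Fin 2) (s : ℕ → Bool) (n : ℕ) :
    chi f s n = true ↔ s n = true ∧ ∀ x < n, chi f s x = true → f x n = 1 := by
  have hlast : chi f s n = (s n && chk f (seqA f s n, n)) := by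
    show (seqA f s n ++ [s n && chk f (seqA f s n, n)]).getD n false = _
    rw [List.getD_eq_getElem?_getD]
    rw [List.getElem?_append_right (by rw [seqA_length])]
    simp [seqA_length]
  rw [hlast, Bool.and_eq_true, chk_iff]
  constructor
  · rintro ⟨h1, h2⟩
    exact ⟨h1, fun x hx hc => h2 x hx (by rw [chi_getD f s hx]; exact hc)⟩
  · rintro ⟨h1, h2⟩
    exact ⟨h1, fun x hx hl => h2 x hx (by rw [← chi_getD f s hx]; exact hl)⟩

theorem chk_computable {f : ℕ → ℕ → Fin 2} (hf : Computable₂ f) : Computable (chk f) := by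
  have h : Computable₂ fun (p : List Bool × ℕ) (q : ℕ × Bool) =>
      q.2 && ((!(p.1.getD q.1 false)) || decide (f q.1 p.2 = 1)) := by
    have hgetD : Computable₂ fun (l : List Bool) (n : ℕ) => l.getD n false :=
      (Primrec.list_getD false).to_comp
    have heq : Computable₂ fun (a b : Fin 2) => decide (a = b) := Primrec.eq.decide.to_comp
    exact Computable₂.mk <| Primrec.and.to_comp.comp
      (Computable.snd.comp Computable.snd)
      (Primrec.or.to_comp.comp
        (Primrec.not.to_comp.comp
          (hgetD.comp (Computable.fst.comp Computable.fst) (Computable.fst.comp Computable.snd)))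
        (heq.comp
          (hf.comp (Computable.fst.comp Computable.snd) (Computable.snd.comp Computable.fst))
          (Computable.const 1)))
  exact Computable.nat_rec Computable.snd (Computable.const true) h

theorem seqA_computable {f : ℕ → ℕ → Fin 2} {s : ℕ → Bool} (hf : Computable₂ f)
    (hs : Computable s) : Computable (seqA f s) := by
  have h : Computable₂ fun (_ : ℕ) (q : ℕ × List Bool) =>
      q.2 ++ [s q.1 && chk f (q.2, q.1)] := by
    exact Computable₂.mk <| Computable.list_concat.comp
      (Computable.snd.comp Computable.snd)
      (Primrec.and.to_comp.comp
        (hs.comp (Computable.fst.comp Computable.snd))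
        ((chk_computable hf).comp
          (Computable.pair (Computable.snd.comp Computable.snd)
            (Computable.fst.comp Computable.snd))))
  exact Computable.nat_rec Computable.id (Computable.const []) h

theorem chi_computable {f : ℕ → ℕ → Fin 2} {s : ℕ → Bool} (hf : Computable₂ f)
    (hs : Computable s) : Computable (chi f s) := by
  have hgetD : Computable₂ fun (l : List Bool) (n : ℕ) => l.getD n false :=
    (Primrec.list_getD false).to_comp
  exact hgetD.comp ((seqA_computable hf hs).comp Computable.succ) Computable.id

theorem fin2_ne_zero : ∀ {c : Fin 2}, c ≠ 0 → c = 1 := by decide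

/-- Main induction. -/
theorem aux (f : ℕ → ℕ → Fin 2) (hf : Computable₂ f) :
    ∀ (k : ℕ) (s : ℕ → Bool), Computable s → {n | s n = true}.Infinite →
    (∀ F : Finset ℕ, (∀ x ∈ F, s x = true) → F.card = k →
      ¬ ∀ x ∈ F, ∀ y ∈ F, x < y → f x y = 0) →
    ∃ H : Set ℕ, H.Infinite ∧ ComputablePred (· ∈ H) ∧
      ∀ x ∈ H, ∀ y ∈ H, x < y → f x y = 1 := by
  intro k
  induction k with
  | zero =>
    intro s _ _ hno
    exact absurd (by simp) (hno ∅ (by simp) rfl)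
  | succ k ih =>
    intro s hs hsinf hno
    by_cases hc : ∃ a, s a = true ∧ {y | s y = true ∧ a < y ∧ f a y = 0}.Infinite
    · obtain ⟨a, ha, hainf⟩ := hc
      set s' : ℕ → Bool := fun y => s y && (decide (a < y) && decide (f a y = 0)) with hs'def
      have hs' : Computable s' := by
        have h1 : Computable fun y : ℕ => decide (a < y) :=
          (Primrec.nat_lt.comp (Primrec.const a) Primrec.id).decide.to_comp
        have h2 : Computable fun y : ℕ => decide (f a y = 0) := by
          have heq : Computable₂ fun (c d : Fin 2) => decide (c = d) := Primrec.eq.decide.to_comp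
          exact heq.comp (hf.comp (Computable.const a) Computable.id) (Computable.const 0)
        exact Primrec.and.to_comp.comp hs (Primrec.and.to_comp.comp h1 h2)
      have hset : {n | s' n = true} = {y | s y = true ∧ a < y ∧ f a y = 0} := by
        ext y; simp [hs'def]
      refine ih s' hs' (by rw [hset]; exact hainf) ?_
      intro F hF hcard hhom
      have hFs' : ∀ x ∈ F, s x = true ∧ a < x ∧ f a x = 0 := by
        intro x hx
        have := hF x hx
        rw [hs'def] at this
        simpa using this
      have haF : a ∉ F := fun h => absurd (hFs' a h).2.1 (lt_irrefl a)
      refine hno (insert a F) ?_ ?_ ?_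
      · intro x hx
        rcases Finset.mem_insert.1 hx with rfl | hx
        · exact ha
        · exact (hFs' x hx).1
      · rw [Finset.card_insert_of_notMem haF, hcard]
      · intro x hx y hy hxy
        rcases Finset.mem_insert.1 hx with h1 | h1 <;> rcases Finset.mem_insert.1 hy with h2 | h2
        · exact absurd hxy (by rw [h1, h2]; exact lt_irrefl a)
        · rw [h1]; exact (hFs' y h2).2.2
        · exfalso; have := (hFs' x h1).2.1; rw [h2] at hxy; omega
        · exact hhom x h1 y h2 hxy
    · push_neg at hc
      have hfin : ∀ a, s a = true → {y | s y = true ∧ a < y ∧ f a y = 0}.Finite := by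
        intro a ha
        rcases Set.finite_or_infinite {y | s y = true ∧ a < y ∧ f a y = 0} with h | h
        · exact h
        · exact absurd h (Set.not_infinite.2 (hc a ha))
      refine ⟨{n | chi f s n = true}, ?_, ?_, ?_⟩
      · -- Infinite
        by_contra hH
        rw [Set.not_infinite] at hH
        have hHs : ∀ x, chi f s x = true → s x = true := fun x hx => ((chi_iff f s x).1 hx).1
        have hT : (⋃ x ∈ {n | chi f s n = true},
            {y | s y = true ∧ x < y ∧ f x y = 0}).Finite :=
          Set.Finite.biUnion hH fun x hx => hfin x (hHs x hx)
        have hsub : {n | s n = true} \ (⋃ x ∈ {n | chi f s n = true},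
            {y | s y = true ∧ x < y ∧ f x y = 0}) ⊆ {n | chi f s n = true} := by
          rintro z ⟨hzs, hzT⟩
          rw [Set.mem_setOf_eq, chi_iff]
          refine ⟨hzs, fun x hx hcx => ?_⟩
          apply fin2_ne_zero
          intro h0
          exact hzT (Set.mem_biUnion hcx ⟨hzs, hx, h0⟩)
        exact absurd ((hsinf.diff hT).mono hsub) (Set.not_infinite.2 hH)
      · exact ComputablePred.computable_iff.2 ⟨chi f s, chi_computable hf hs, rfl⟩
      · intro x hx y hy hxy
        exact ((chi_iff f s y).1 hy).2 x hxy hx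

end UnbalancedRamsey

/-- If `f` is a computable 2-coloring of pairs and no set of `k` elements is
`f`-homogeneous for color 0, then there is an infinite computable set that is
`f`-homogeneous for color 1. -/
theorem unbalanced_ramsey (f : ℕ → ℕ → Fin 2) (hf : Computable₂ f) (k : ℕ)
    (hno : ∀ F : Finset ℕ, F.card = k → ¬ ∀ x ∈ F, ∀ y ∈ F, x < y → f x y = 0) :
    ∃ H : Set ℕ, H.Infinite ∧ ComputablePred (· ∈ H) ∧
      ∀ x ∈ H, ∀ y ∈ H, x < y → f x y = 1 := by
  refine UnbalancedRamsey.aux f hf k (fun _ => true) (Computable.const true) ?_ ?_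
  · have : {n : ℕ | (fun _ => true) n = true} = Set.univ := by ext n; simp
    rw [this]; exact Set.infinite_univ
  · intro F _ hcard; exact hno F hcard
end

section
/- Let L = (ℕ, <_L) be a computable linear order of order type ω + ω*, with no computable infinite L-ascending sequence and no computable infinite L-descending sequence. Then both the ω-part A(L) = { x : x <_L y for all but finitely many y } and its complement are hyperimmune. -/
/-- `r` (as a boolean relation) is a strict linear order on ℕ. -/
def IsLinearRel (r : ℕ → ℕ → Bool) : Prop :=
  (∀ x, r x x = false) ∧
  (∀ x y z, r x y = true → r y z = true → r x z = true) ∧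
  (∀ x y, x ≠ y → r x y = true ∨ r y x = true)

/-- The order has type `ω + ω*`: each element has finitely many predecessors or finitely
many successors, and both parts are infinite. -/
def OrderTypeOmegaPlusOmegaStar (r : ℕ → ℕ → Bool) : Prop :=
  (∀ x, {y | r y x = true}.Finite ∨ {y | r x y = true}.Finite) ∧
  {x | {y | r y x = true}.Finite}.Infinite ∧
  {x | {y | r x y = true}.Finite}.Infinite

/-- An infinite set is hyperimmune if its principal function is not dominated by any
computable function. -/
def Hyperimmune (A : Set ℕ) : Prop :=
  A.Infinite ∧ ∀ f : ℕ → ℕ, Computable f → ¬ ∀ n, Nat.nth (· ∈ A) n ≤ f n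

theorem computable_nat_search {q : ℕ → ℕ → Bool} (hq : Computable₂ q)
    (H : ∀ n, ∃ x, q n x = true) :
    ∃ F : ℕ → ℕ, Computable F ∧ ∀ n, q n (F n) = true := by
  classical
  refine ⟨fun n => Nat.find (H n), ?_, fun n => Nat.find_spec (H n)⟩
  have hp : Partrec fun n => Nat.rfind (fun x => (Part.some (q n x))) :=
    Partrec.rfind hq.partrec₂
  refine hp.of_eq_tot fun n => ?_
  refine Nat.mem_rfind.2 ?_
  refine ⟨Part.mem_some_iff.2 (Nat.find_spec (H n)).symm, fun {m} hm => ?_⟩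
  have h2 : q n m = false := by
    have := Nat.find_min (H n) hm
    simpa using this
  exact Part.mem_some_iff.2 h2.symm

theorem exists_rank {r : ℕ → ℕ → Bool} (hirr : ∀ x, r x x = false)
    (htrans : ∀ x y z, r x y = true → r y z = true → r x z = true)
    (htot : ∀ x y, x ≠ y → r x y = true ∨ r y x = true)
    (S : Finset ℕ) {n : ℕ} (hn : n < S.card) :
    ∃ x ∈ S, (S.filter fun y => r y x = true).card = n := by
  classical
  set ρ : ℕ → ℕ := fun x => (S.filter fun y => r y x = true).card with hρ
  have hmono : ∀ x ∈ S, ∀ y, r x y = true → ρ x < ρ y := by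
    intro x hx y hxy
    apply Finset.card_lt_card
    constructor
    · intro z hz
      simp only [Finset.mem_filter] at hz ⊢
      exact ⟨hz.1, htrans _ _ _ hz.2 hxy⟩
    · intro hsub
      have hxmem : x ∈ S.filter fun z => r z y = true := Finset.mem_filter.2 ⟨hx, hxy⟩
      have := Finset.mem_filter.1 (hsub hxmem)
      rw [hirr x] at this
      exact Bool.false_ne_true this.2
  have hinj : Set.InjOn ρ S := by
    intro x hx y hy hxy
    by_contra hne
    rcases htot x y hne with h | h
    · exact absurd hxy (Nat.ne_of_lt (hmono x hx y h))
    · exact absurd hxy.symm (Nat.ne_of_lt (hmono y hy x h))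
  have himg : S.image ρ = Finset.range S.card := by
    apply Finset.eq_of_subset_of_card_le
    · intro v hv
      simp only [Finset.mem_image] at hv
      obtain ⟨x, hx, rfl⟩ := hv
      simp only [Finset.mem_range]
      have hsub : (S.filter fun y => r y x = true) ⊆ S.erase x := by
        intro z hz
        rcases Finset.mem_filter.1 hz with ⟨hzS, hzx⟩
        refine Finset.mem_erase.2 ⟨?_, hzS⟩
        rintro rfl
        rw [hirr z] at hzx
        exact Bool.false_ne_true hzx
      calc ρ x ≤ (S.erase x).card := Finset.card_le_card hsub
        _ < S.card := Finset.card_erase_lt_of_mem hx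
    · rw [Finset.card_range, Finset.card_image_of_injOn hinj]
  have hmem : n ∈ S.image ρ := by rw [himg]; exact Finset.mem_range.2 hn
  obtain ⟨x, hx, hxn⟩ := Finset.mem_image.1 hmem
  exact ⟨x, hx, hxn⟩

def cntR (r : ℕ → ℕ → Bool) (x k : ℕ) : ℕ :=
  Nat.rec 0 (fun y IH => IH + cond (r y x) 1 0) k

theorem cntR_comp {r : ℕ → ℕ → Bool} (hcomp : Computable₂ r) : Computable₂ (cntR r) := by
  have hh : Computable fun q : (ℕ × ℕ) × (ℕ × ℕ) => q.2.2 + cond (r q.2.1 q.1.1) 1 0 := by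
    apply Computable₂.comp (f := ((· + ·) : ℕ → ℕ → ℕ)) Primrec.nat_add.to_comp
    · exact Computable.snd.comp Computable.snd
    · exact Computable.cond
        (hcomp.comp (Computable.fst.comp Computable.snd) (Computable.fst.comp Computable.fst))
        (Computable.const 1) (Computable.const 0)
  exact Computable.nat_rec (f := fun (p : ℕ × ℕ) => p.2) (g := fun (_ : ℕ × ℕ) => (0 : ℕ))
    (h := fun a p => p.2 + cond (r p.1 a.1) 1 0)
    Computable.snd (Computable.const 0) hh.to₂

theorem cntR_eq {r : ℕ → ℕ → Bool} (x k : ℕ) :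
    cntR r x k = ((Finset.range k).filter fun y => r y x = true).card := by
  induction k with
  | zero => simp [cntR]
  | succ k ih =>
    have : cntR r x (k + 1) = cntR r x k + cond (r k x) 1 0 := rfl
    rw [this, ih, Finset.range_add_one, Finset.filter_insert]
    cases hb : r k x with
    | false => simp
    | true =>
      rw [if_pos rfl, Finset.card_insert_of_notMem
        (fun h => absurd (Finset.mem_filter.1 h).1 (by simp))]
      rfl

def qR (r : ℕ → ℕ → Bool) (f : ℕ → ℕ) (n x : ℕ) : Bool :=
  decide (x ≤ n + f n) && decide (cntR r x (n + f n + 1) = n)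

set_option maxHeartbeats 2000000 in
theorem qR_comp {r : ℕ → ℕ → Bool} {f : ℕ → ℕ} (hcomp : Computable₂ r)
    (hf : Computable f) : Computable₂ (qR r f) := by
  have m_comp : Computable fun n => n + f n :=
    Primrec.nat_add.to_comp.comp Computable.id hf
  have c1 : Computable fun p : ℕ × ℕ => decide (p.2 ≤ p.1 + f p.1) :=
    Computable₂.comp (Primrec.nat_le.decide.to_comp) Computable.snd (m_comp.comp Computable.fst)
  have c2 : Computable fun p : ℕ × ℕ => decide (cntR r p.2 (p.1 + f p.1 + 1) = p.1) :=
    Computable₂.comp (Primrec.eq.decide.to_comp) ((cntR_comp hcomp).comp Computable.snd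
      (Computable.succ.comp (m_comp.comp Computable.fst))) Computable.fst
  have hc : Computable fun p : ℕ × ℕ =>
      cond (decide (p.2 ≤ p.1 + f p.1)) (decide (cntR r p.2 (p.1 + f p.1 + 1) = p.1)) false :=
    Computable.cond c1 c2 (Computable.const false)
  refine hc.of_eq fun p => ?_
  cases h : decide (p.2 ≤ p.1 + f p.1) <;> simp [qR, h]

set_option maxHeartbeats 2000000 in
theorem omegaPart_hyperimmune (r : ℕ → ℕ → Bool) (hcomp : Computable₂ r)
    (hlin : IsLinearRel r) (htype : OrderTypeOmegaPlusOmegaStar r)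
    (hnoasc : ¬ ∃ g : ℕ → ℕ, Computable g ∧ ∀ n, r (g n) (g (n + 1)) = true) :
    Hyperimmune {x | {y | r y x = true}.Finite} := by
  classical
  obtain ⟨hirr, htrans, htot⟩ := hlin
  have hAinf : {x | {y | r y x = true}.Finite}.Infinite := htype.2.1
  refine ⟨hAinf, fun f hf hdom => hnoasc ?_⟩
  set A := {x | {y | r y x = true}.Finite} with hA
  have hAinf' : (setOf (· ∈ A)).Infinite := by
    exact hAinf
  have compA_lt : ∀ a b, a ∈ A → b ∉ A → r a b = true := by
    intro a b ha hb
    rcases eq_or_ne a b with rfl | hne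
    · exact absurd ha hb
    rcases htot a b hne with h | h
    · exact h
    · exfalso
      apply hb
      have hsub : {y | r y b = true} ⊆ {y | r y a = true} := fun y hy => htrans _ _ _ hy h
      exact ha.subset hsub
  have key : ∀ n, ∃ x, qR r f n x = true := by
    intro n
    obtain ⟨x, hxS, hxc⟩ := exists_rank hirr htrans htot (Finset.range (n + f n + 1))
      (n := n) (by rw [Finset.card_range]; omega)
    refine ⟨x, ?_⟩
    have hx1 : x ≤ n + f n := Nat.lt_succ_iff.1 (Finset.mem_range.1 hxS)
    have hx2 : cntR r x (n + f n + 1) = n := (cntR_eq x (n + f n + 1)).trans hxc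
    simp [qR, hx1, hx2]
  obtain ⟨g0, g0_comp, g0_spec⟩ := computable_nat_search (qR_comp hcomp hf) key
  have g0_cnt : ∀ n,
      ((Finset.range (n + f n + 1)).filter fun y => r y (g0 n) = true).card = n := by
    intro n
    have := g0_spec n
    simp only [qR, Bool.and_eq_true, decide_eq_true_eq] at this
    rw [← cntR_eq]
    exact this.2
  have g0_mem : ∀ n, g0 n ∈ A := by
    intro n
    by_contra hx
    have hsub : ∀ k ∈ Finset.range (n + 1),
        Nat.nth (· ∈ A) k ∈ (Finset.range (n + f n + 1)).filter fun y => r y (g0 n) = true := by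
      intro k hk
      have hk' : k ≤ n := Nat.lt_succ_iff.1 (Finset.mem_range.1 hk)
      have hmem : Nat.nth (· ∈ A) k ∈ A := Nat.nth_mem_of_infinite hAinf' k
      have hle : Nat.nth (· ∈ A) k ≤ f n :=
        le_trans ((Nat.nth_le_nth hAinf').2 hk') (hdom n)
      exact Finset.mem_filter.2 ⟨Finset.mem_range.2 (by omega), compA_lt _ _ hmem hx⟩
    have hcard : n + 1 ≤ ((Finset.range (n + f n + 1)).filter
        fun y => r y (g0 n) = true).card := by
      have := Finset.card_le_card_of_injOn (f := fun k => Nat.nth (· ∈ A) k) hsub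
        (fun a _ b _ hab => Nat.nth_injective hAinf' hab)
      simpa using this
    rw [g0_cnt n] at hcard
    omega
  have unb : ∀ x, ∃ k, r (g0 x) (g0 k) = true := by
    intro x
    have hfin : {y | r y (g0 x) = true}.Finite := g0_mem x
    set p := hfin.toFinset.card with hp
    refine ⟨p + 1, ?_⟩
    have hnotle : ¬(r (g0 (p + 1)) (g0 x) = true ∨ g0 (p + 1) = g0 x) := by
      intro h
      have hsub : ((Finset.range ((p + 1) + f (p + 1) + 1)).filter
          fun y => r y (g0 (p + 1)) = true) ⊆ hfin.toFinset := by
        intro z hz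
        rcases Finset.mem_filter.1 hz with ⟨_, hz2⟩
        rw [Set.Finite.mem_toFinset]
        rcases h with h | h
        · exact htrans _ _ _ hz2 h
        · rw [h] at hz2; exact hz2
      have hcc := Finset.card_le_card hsub
      rw [g0_cnt (p + 1)] at hcc
      omega
    push_neg at hnotle
    rcases htot (g0 x) (g0 (p + 1)) (Ne.symm hnotle.2) with h | h
    · exact h
    · exact absurd h hnotle.1
  have q2comp : Computable₂ fun x k => r (g0 x) (g0 k) :=
    hcomp.comp (g0_comp.comp Computable.fst) (g0_comp.comp Computable.snd)
  obtain ⟨F, F_comp, F_spec⟩ := computable_nat_search q2comp unb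
  set N : ℕ → ℕ := fun k => Nat.rec (motive := fun _ => ℕ) 0 (fun _ IH => F IH) k with hN
  have N_comp : Computable N := by
    have := Computable.nat_rec (f := @id ℕ) (g := fun (_ : ℕ) => (0 : ℕ))
      (h := fun (_ : ℕ) (p : ℕ × ℕ) => F p.2)
      Computable.id (Computable.const 0)
      ((F_comp.comp (Computable.snd.comp Computable.snd)).to₂)
    exact this.of_eq fun k => rfl
  refine ⟨fun k => g0 (N k), g0_comp.comp N_comp, fun k => ?_⟩
  have hstep : N (k + 1) = F (N k) := rfl
  show r (g0 (N k)) (g0 (N (k + 1))) = true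
  rw [hstep]
  exact F_spec (N k)


/-- For a computable linear order of type `ω + ω*` with no computable infinite ascending
or descending sequence, the `ω`-part and its complement are both hyperimmune. -/
theorem omega_part_bihyperimmune (r : ℕ → ℕ → Bool) (hcomp : Computable₂ r)
    (hlin : IsLinearRel r) (htype : OrderTypeOmegaPlusOmegaStar r)
    (hnoasc : ¬ ∃ g : ℕ → ℕ, Computable g ∧ ∀ n, r (g n) (g (n + 1)) = true)
    (hnodesc : ¬ ∃ g : ℕ → ℕ, Computable g ∧ ∀ n, r (g (n + 1)) (g n) = true) :
    Hyperimmune {x | {y | r y x = true}.Finite} ∧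
    Hyperimmune {x | {y | r y x = true}.Finite}ᶜ := by
  obtain ⟨hirr, htrans, htot⟩ := hlin
  have hnotboth : ∀ x, {y | r y x = true}.Finite → {y | r x y = true}.Finite → False := by
    intro x h1 h2
    have hcover : (Set.univ : Set ℕ) ⊆ {y | r y x = true} ∪ {y | r x y = true} ∪ {x} := by
      intro y _
      rcases eq_or_ne y x with rfl | hne
      · exact Or.inr rfl
      · rcases htot y x hne with h | h
        · exact Or.inl (Or.inl h)
        · exact Or.inl (Or.inr h)
    exact Set.infinite_univ (((h1.union h2).union (Set.finite_singleton x)).subset hcover)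
  have hcompl : {x | {y | r y x = true}.Finite}ᶜ = {x | {y | r x y = true}.Finite} := by
    ext x
    simp only [Set.mem_compl_iff, Set.mem_setOf_eq]
    constructor
    · intro h
      rcases htype.1 x with h1 | h1
      · exact absurd h1 h
      · exact h1
    · intro h hpred
      exact hnotboth x hpred h
  constructor
  · exact omegaPart_hyperimmune r hcomp ⟨hirr, htrans, htot⟩ htype hnoasc
  · rw [hcompl]
    have hcomp' : Computable₂ (fun x y => r y x) :=
      hcomp.comp Computable.snd Computable.fst
    have hlin' : IsLinearRel (fun x y => r y x) :=
      ⟨hirr, fun x y z h1 h2 => htrans z y x h2 h1, fun x y h => (htot x y h).symm⟩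
    have htype' : OrderTypeOmegaPlusOmegaStar (fun x y => r y x) :=
      ⟨fun x => (htype.1 x).symm, htype.2.2, htype.2.1⟩
    exact omegaPart_hyperimmune (fun x y => r y x) hcomp' hlin' htype' hnodesc
end
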